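/- arXiv:2504.05933 — 13 statements merged into one kernel-verified Lean document; each statement's English description precedes it below -/
import Mathlib

section
/- If a sequence of positive integers (a_n) satisfies lim_{n→∞} a_n^{1/2^n} = ∞, then the sum of its reciprocals ∑ 1/a_n is irrational (assuming the sum converges). -/
open Filter Finset

/-! Auxiliary: greedy selection of minimal values of `a`. -/

lemma exists_min_outside (a : ℕ → ℕ) (F : Finset ℕ) :
    ∃ m, m ∉ F ∧ ∀ k, k ∉ F → a m ≤ a k := by
  classical
  have hne : ∃ v, ∃ m, m ∉ F ∧ a m = v := by
    refine ⟨a ((F.sup id) + 1), (F.sup id) + 1, ?_, rfl⟩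
    intro hmem
    have h1 := Finset.le_sup (f := id) hmem
    simp only [id_eq] at h1
    omega
  obtain ⟨m, hm, hv⟩ := Nat.find_spec hne
  refine ⟨m, hm, fun k hk => ?_⟩
  have h2 : Nat.find hne ≤ a k := Nat.find_min' hne ⟨k, hk, rfl⟩
  omega

noncomputable def pickSets (a : ℕ → ℕ) : ℕ → Finset ℕ
  | 0 => ∅
  | n+1 => insert (Classical.choose (exists_min_outside a (pickSets a n))) (pickSets a n)

noncomputable def pick (a : ℕ → ℕ) (n : ℕ) : ℕ :=
  Classical.choose (exists_min_outside a (pickSets a n))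

/-- `bb a n` : the value of the n-th smallest term. -/
noncomputable def bb (a : ℕ → ℕ) (n : ℕ) : ℕ := a (pick a n)

lemma pickSets_succ (a : ℕ → ℕ) (n : ℕ) :
    pickSets a (n+1) = insert (pick a n) (pickSets a n) := rfl

lemma pick_not_mem (a : ℕ → ℕ) (n : ℕ) : pick a n ∉ pickSets a n :=
  (Classical.choose_spec (exists_min_outside a (pickSets a n))).1

lemma pick_min (a : ℕ → ℕ) (n : ℕ) : ∀ k, k ∉ pickSets a n → bb a n ≤ a k :=
  (Classical.choose_spec (exists_min_outside a (pickSets a n))).2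

lemma pickSets_mono (a : ℕ → ℕ) : ∀ {n m : ℕ}, n ≤ m → pickSets a n ⊆ pickSets a m := by
  intro n m h
  induction m with
  | zero => simp_all
  | succ m ih =>
    rcases Nat.lt_or_ge n (m+1) with h1 | h1
    · have := ih (by omega)
      rw [pickSets_succ]
      exact this.trans (Finset.subset_insert _ _)
    · have : n = m + 1 := by omega
      subst this; rfl

lemma pick_mem (a : ℕ → ℕ) {i n : ℕ} (h : i < n) : pick a i ∈ pickSets a n := by
  have h1 : pick a i ∈ pickSets a (i+1) := by
    rw [pickSets_succ]; exact Finset.mem_insert_self _ _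
  exact pickSets_mono a h h1

lemma pickSets_card (a : ℕ → ℕ) (n : ℕ) : (pickSets a n).card = n := by
  induction n with
  | zero => rfl
  | succ n ih =>
    rw [pickSets_succ, Finset.card_insert_of_notMem (pick_not_mem a n), ih]

lemma bb_mono (a : ℕ → ℕ) {n m : ℕ} (h : n ≤ m) : bb a n ≤ bb a m := by
  rcases Nat.eq_or_lt_of_le h with h' | h'
  · subst h'; exact le_refl _
  · exact pick_min a n _ (fun hmem => pick_not_mem a m (pickSets_mono a h hmem))

lemma pick_injOn (a : ℕ → ℕ) {i j : ℕ} (h : i < j) : pick a i ≠ pick a j := by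
  intro heq
  exact pick_not_mem a j (heq ▸ pick_mem a h)

lemma prod_pickSets (a : ℕ → ℕ) (n : ℕ) :
    ∏ m ∈ pickSets a n, a m = ∏ i ∈ Finset.range n, bb a i := by
  induction n with
  | zero => rfl
  | succ n ih =>
    rw [pickSets_succ, Finset.prod_insert (pick_not_mem a n), Finset.prod_range_succ, ih, bb]
    ring

/-! Nat arithmetic helpers -/

lemma two_pow_linear (M j : ℕ) : 2^(M+1) + j ≤ 2^(M+1+j) := by
  induction j with
  | zero => simp
  | succ j ih =>
    have h1 : (1:ℕ) ≤ 2^(M+1+j) := Nat.one_le_two_pow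
    have h2 : 2^(M+1+(j+1)) = 2^(M+1+j) + 2^(M+1+j) := by ring
    omega

lemma two_mul_le_two_pow : ∀ k : ℕ, 3 ≤ k → 2*k + 2 ≤ 2^k := by
  intro k hk
  induction k, hk using Nat.le_induction with
  | base => norm_num
  | succ k hk ih =>
    have h2 : 2^(k+1) = 2^k + 2^k := by ring
    have h3 : (8:ℕ) ≤ 2^k := by
      calc (8:ℕ) = 2^3 := by norm_num
      _ ≤ 2^k := Nat.pow_le_pow_right (by omega) hk
    omega

lemma log2_succ_le_half (m : ℕ) : Nat.log 2 (m + 1) ≤ m / 2 + 2 := by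
  set k := Nat.log 2 (m+1) with hk
  rcases Nat.lt_or_ge k 3 with h | h
  · omega
  · have h1 : 2^k ≤ m + 1 := Nat.pow_log_le_self 2 (by omega)
    have h2 := two_mul_le_two_pow k h
    omega

lemma pow_ineq1 (M j : ℕ) : 4^(2^M) * 2^(M+j) ≤ 2^M * 4^(2^(M+j)) := by
  have h4 : (4:ℕ) = 2^2 := by norm_num
  have l1 : (4:ℕ)^(2^M) = 2^(2^(M+1)) := by
    rw [h4, ← pow_mul, pow_succ]
    ring_nf
  have l2 : (4:ℕ)^(2^(M+j)) = 2^(2^(M+j+1)) := by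
    rw [h4, ← pow_mul, pow_succ]
    ring_nf
  rw [l1, l2, ← pow_add, ← pow_add]
  apply Nat.pow_le_pow_right (by omega)
  have h5 := two_pow_linear M j
  have h6 : 2^(M+1+j) ≤ 2^(M+j+1) := by
    apply Nat.pow_le_pow_right (by omega); omega
  omega

/-! The abstract numeric recursion lemma. -/

lemma abstract_rec (β : ℕ → ℕ) (C : ℕ)
    (h : ∀ n, β n ≤ C + n + Nat.log 2 (β n + 1) + ∑ i ∈ Finset.range n, β i) :
    ∃ D, ∀ n, β n ≤ D * 2 ^ n := by
  set σ : ℕ → ℕ := fun n => ∑ i ∈ Finset.range n, β i with hσ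
  have h' : ∀ n, β n ≤ C + n + Nat.log 2 (β n + 1) + σ n := fun n => h n
  have hσs : ∀ n, σ (n+1) = σ n + β n := by
    intro n; simp [hσ, Finset.sum_range_succ]
  -- (E1)
  have E1 : ∀ n, β n ≤ 2*C + 2*n + 5 + 2 * σ n := by
    intro n
    have h1 := h' n
    have h2 := log2_succ_le_half (β n)
    omega
  -- Stage 1 : σ n ≤ K₁ * 3^n
  set K₁ := C + 6 with hK₁
  have stage1 : ∀ n, σ n + n + C + 4 ≤ K₁ * 3 ^ n := by
    intro n
    induction n with
    | zero => simp [hσ]; omega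
    | succ n ih =>
      have h1 := E1 n
      have h2 := hσs n
      have h3 : 3 * (σ n + n + C + 4) ≤ 3 * (K₁ * 3^n) := by omega
      have h4 : 3 * (K₁ * 3^n) = K₁ * 3^(n+1) := by ring
      omega
  -- Stage 2 : log bound
  set K₂ := 2*C + 2*K₁ + 8 with hK₂
  have stage2 : ∀ n, Nat.log 2 (β n + 1) ≤ K₂ + 2 * n := by
    intro n
    have h1 : β n + 1 ≤ 2 ^ (K₂ + 2*n) := by
      have h2 := E1 n
      have h3 := stage1 n
      have h4 : 3^n ≤ 4^n := Nat.pow_le_pow_left (by omega) n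
      have h5 : n < 4^n := Nat.lt_pow_self (n := n) (by omega)
      have h6 : β n + 1 ≤ K₂ * 4^n := by nlinarith
      have h7 : K₂ ≤ 2^K₂ := (Nat.lt_two_pow_self (n := K₂)).le
      have h8 : (4:ℕ)^n = 2^(2*n) := by
        rw [pow_mul]; norm_num
      calc β n + 1 ≤ K₂ * 4^n := h6
        _ ≤ 2^K₂ * 4^n := Nat.mul_le_mul_right _ h7
        _ = 2^K₂ * 2^(2*n) := by rw [h8]
        _ = 2^(K₂ + 2*n) := by rw [← pow_add]
    calc Nat.log 2 (β n + 1) ≤ Nat.log 2 (2^(K₂ + 2*n)) := Nat.log_mono_right h1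
      _ = K₂ + 2*n := Nat.log_pow (by omega) _
  -- Stage 3
  set C₃ := C + K₂ with hC₃
  have h'' : ∀ n, β n ≤ C₃ + 3*n + σ n := by
    intro n
    have h1 := h' n
    have h2 := stage2 n
    omega
  set W := C₃ + 10 with hW
  set D₀ := σ 2 + 2 * W + 1 with hD₀
  have key : ∀ n, 2 ≤ n → σ n + W * n ≤ D₀ * 2 ^ n := by
    intro n hn
    induction n with
    | zero => omega
    | succ n ih =>
      rcases Nat.lt_or_ge n 2 with h1 | h1
      · have h2 : n + 1 = 2 := by omega
        rw [h2]
        have : D₀ * 2^2 = 4 * D₀ := by ring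
        rw [this]
        omega
      · have ih' := ih h1
        have h2 := h'' n
        have h3 : σ (n+1) = σ n + β n := hσs n
        have h4 : C₃ + 3*n + W ≤ W * n := by
          have h5 : W * n = C₃ * n + 10 * n := by rw [hW]; ring
          have h6 : C₃ * 2 ≤ C₃ * n := Nat.mul_le_mul_left _ h1
          omega
        have h7 : W * (n+1) = W * n + W := by ring
        have h8 : 2 * (D₀ * 2^n) = D₀ * 2^(n+1) := by ring
        omega
  refine ⟨2 * D₀ + β 0 + 1, fun n => ?_⟩
  cases n with
  | zero => simp; omega
  | succ n =>
    have h1 : β (n+1) ≤ σ (n+2) := by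
      have h2 : σ (n+2) = σ (n+1) + β (n+1) := hσs (n+1)
      omega
    have h2 := key (n+2) (by omega)
    have h3 : D₀ * 2^(n+2) = (2*D₀) * 2^(n+1) := by ring
    have h4 : (2*D₀) * 2^(n+1) ≤ (2 * D₀ + β 0 + 1) * 2^(n+1) :=
      Nat.mul_le_mul_right _ (by omega)
    omega
lemma tail_bound (a : ℕ → ℕ) (hpos : ∀ n, 0 < a n)
    (hsum : Summable (fun n => 1 / (a n : ℝ)))
    (M₀ : ℕ) (hM₀ : ∀ m, M₀ ≤ m → 4^(2^m) ≤ a m) (n : ℕ) :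
    (∑' m, 1 / (a m : ℝ)) - ∑ m ∈ pickSets a n, 1 / (a m : ℝ)
      ≤ ((max M₀ (Nat.log 2 (Nat.log 2 (bb a n) + 1) + 1) + 1 : ℕ) : ℝ) / (bb a n : ℝ) := by
  classical
  set f : ℕ → ℝ := fun m => 1 / (a m : ℝ) with hf
  set b : ℕ := bb a n with hb
  have hb1 : 1 ≤ b := hpos (pick a n)
  have hbR : (0:ℝ) < (b:ℝ) := by exact_mod_cast hb1
  set M : ℕ := max M₀ (Nat.log 2 (Nat.log 2 b + 1) + 1) with hM
  set G : Finset ℕ := pickSets a n with hG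
  set s : Finset ℕ := G ∪ Finset.range M with hs
  -- b < 2^(2^M)
  have hb2 : b < 2^(2^M) := by
    set β := Nat.log 2 b with hβ
    have h1 : β + 1 < 2^(Nat.log 2 (β+1) + 1) := Nat.lt_pow_succ_log_self (by omega) _
    have h2 : 2^(Nat.log 2 (β+1) + 1) ≤ 2^M := by
      apply Nat.pow_le_pow_right (by omega)
      exact le_max_right _ _ |>.trans (le_refl _)
    have h3 : β + 2 ≤ 2^M := by omega
    have h4 : b < 2^(β+1) := Nat.lt_pow_succ_log_self (by omega) b
    have h5 : 2^(β+1) ≤ 2^(2^M) := Nat.pow_le_pow_right (by omega) (by omega)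
    omega
  -- decomposition
  have hsplit : ∑ m ∈ s, f m + ∑' (x : ↑((↑s : Set ℕ)ᶜ)), f ↑x = ∑' m, f m :=
    Summable.sum_add_tsum_compl hsum
  have hGsub : G ⊆ s := Finset.subset_union_left
  have hsd : ∑ m ∈ s \ G, f m + ∑ m ∈ G, f m = ∑ m ∈ s, f m := Finset.sum_sdiff hGsub
  -- part 1
  have part1 : ∑ m ∈ s \ G, f m ≤ (M:ℝ) * (1 / (b:ℝ)) := by
    have hcard : (s \ G).card ≤ M := by
      have h1 : s \ G ⊆ Finset.range M := by
        intro x hx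
        rw [Finset.mem_sdiff] at hx
        rcases Finset.mem_union.mp hx.1 with h2 | h2
        · exact absurd h2 hx.2
        · exact h2
      calc (s \ G).card ≤ (Finset.range M).card := Finset.card_le_card h1
        _ = M := Finset.card_range M
    have h2 : ∀ m ∈ s \ G, f m ≤ 1 / (b:ℝ) := by
      intro m hm
      rw [Finset.mem_sdiff] at hm
      have h3 : b ≤ a m := pick_min a n m hm.2
      have h4 : (0:ℝ) < (a m : ℝ) := by exact_mod_cast hpos m
      apply one_div_le_one_div_of_le hbR
      exact_mod_cast h3
    calc ∑ m ∈ s \ G, f m ≤ (s \ G).card • (1 / (b:ℝ)) := Finset.sum_le_card_nsmul _ _ _ h2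
      _ = ((s \ G).card : ℝ) * (1 / (b:ℝ)) := by rw [nsmul_eq_mul]
      _ ≤ (M:ℝ) * (1 / (b:ℝ)) := by
          apply mul_le_mul_of_nonneg_right _ (by positivity)
          exact_mod_cast hcard
  -- part 2 : the infinite tail
  set c : ℝ := (2^M : ℝ) / (4^(2^M) : ℝ) with hc
  have hcpos : 0 < c := by positivity
  have part2 : ∑' (x : ↑((↑s : Set ℕ)ᶜ)), f ↑x ≤ 1 / (b:ℝ) := by
    have hdom : ∀ m : ℕ, ((↑s : Set ℕ)ᶜ).indicator f m ≤ c * (1/2)^m := by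
      intro m
      by_cases hm : m ∈ ((↑s : Set ℕ)ᶜ)
      · rw [Set.indicator_of_mem hm]
        have hms : m ∉ s := hm
        have hmM : M ≤ m := by
          by_contra h1
          exact hms (Finset.mem_union.mpr (Or.inr (Finset.mem_range.mpr (by omega))))
        have h2 : 4^(2^m) ≤ a m := hM₀ m (le_trans (le_max_left _ _) hmM)
        have h3 : (4:ℕ)^(2^M) * 2^m ≤ 2^M * 4^(2^m) := by
          obtain ⟨j, rfl⟩ := Nat.exists_eq_add_of_le hmM
          exact pow_ineq1 M j
        have h4 : (0:ℝ) < (a m : ℝ) := by exact_mod_cast hpos m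
        have h5 : c * (1/2)^m = (2^M : ℝ) / (4^(2^M) * 2^m) := by
          rw [hc, div_pow, one_pow, div_mul_div_comm, mul_one]
        rw [h5, hf]
        rw [div_le_div_iff₀ h4 (by positivity)]
        have h6 : (4:ℝ)^(2^m) ≤ (a m : ℝ) := by exact_mod_cast h2
        have h7 : ((4:ℝ)^(2^M) * 2^m) ≤ 2^M * 4^(2^m) := by exact_mod_cast h3
        have h8 : (2:ℝ)^M * 4^(2^m) ≤ 2^M * (a m : ℝ) :=
          mul_le_mul_of_nonneg_left h6 (by positivity)
        nlinarith [h7, h8]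
      · rw [Set.indicator_of_notMem hm]
        positivity
    have hsum1 : Summable (((↑s : Set ℕ)ᶜ).indicator f) := hsum.indicator _
    have hsum2 : Summable (fun m : ℕ => c * (1/2:ℝ)^m) := summable_geometric_two.mul_left c
    have h8 : ∑' (x : ↑((↑s : Set ℕ)ᶜ)), f ↑x = ∑' m, ((↑s : Set ℕ)ᶜ).indicator f m :=
      tsum_subtype _ f
    rw [h8]
    calc ∑' m, ((↑s : Set ℕ)ᶜ).indicator f m ≤ ∑' m, c * (1/2:ℝ)^m :=
          Summable.tsum_le_tsum hdom hsum1 hsum2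
      _ = c * ∑' m, (1/2:ℝ)^m := tsum_mul_left
      _ = c * 2 := by rw [tsum_geometric_two]
      _ ≤ 1 / (b:ℝ) := by
          rw [hc, div_mul_eq_mul_div, div_le_div_iff₀ (by positivity) hbR]
          have h9 : 2 * 2^M * b ≤ 4^(2^M) := by
            have h10 : (4:ℕ)^(2^M) = 2^(2^M) * 2^(2^M) := by
              have : (4:ℕ) = 2^2 := by norm_num
              rw [this, ← pow_mul, two_mul, pow_add]
            have h11 : M + 1 ≤ 2^M := Nat.lt_two_pow_self (n := M)
            have h12 : 2^(M+1) ≤ 2^(2^M) := Nat.pow_le_pow_right (by omega) h11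
            have h13 : 2^(M+1) = 2 * 2^M := by ring
            have h14 : b ≤ 2^(2^M) := hb2.le
            calc 2 * 2^M * b = 2^(M+1) * b := by rw [h13]
              _ ≤ 2^(2^M) * 2^(2^M) := Nat.mul_le_mul h12 h14
              _ = 4^(2^M) := h10.symm
          calc (2:ℝ)^M * 2 * (b:ℝ) = ((2 * 2^M * b : ℕ) : ℝ) := by push_cast; ring
            _ ≤ ((4^(2^M) : ℕ) : ℝ) := by exact_mod_cast h9
            _ = 1 * (4:ℝ)^(2^M) := by push_cast; ring
  -- assemble
  have heq : (∑' m, f m) - ∑ m ∈ G, f m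
      = ∑ m ∈ s \ G, f m + ∑' (x : ↑((↑s : Set ℕ)ᶜ)), f ↑x := by
    rw [← hsplit]; linarith [hsd]
  rw [heq]
  push_cast
  have : (M:ℝ) * (1/(b:ℝ)) + 1/(b:ℝ) = ((M:ℝ) + 1) / (b:ℝ) := by
    field_simp
  linarith [part1, part2]

theorem reciprocal_sum_irrational_of_doubly_exp_growth
    (a : ℕ → ℕ) (hpos : ∀ n, 0 < a n)
    (hgrowth : Tendsto (fun n => (a n : ℝ) ^ ((1 : ℝ) / 2 ^ n)) atTop atTop)
    (hsum : Summable (fun n => 1 / (a n : ℝ))) :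
    Irrational (∑' n, 1 / (a n : ℝ)) := by
  classical
  by_contra hirr
  rw [Irrational] at hirr
  push_neg at hirr
  obtain ⟨r, hr⟩ := hirr
  set f : ℕ → ℝ := fun m => 1 / (a m : ℝ) with hf
  set S : ℝ := ∑' m, f m with hS
  have hfpos : ∀ m, 0 < f m := fun m => by
    have := hpos m
    simp only [hf]
    positivity
  have hSpos : 0 < S := Summable.tsum_pos hsum (fun i => (hfpos i).le) 0 (hfpos 0)
  have hrS : (r:ℝ) = S := hr
  -- growth in ℕ form
  have hgN : ∀ V : ℕ, 2 ≤ V → ∃ M, ∀ m, M ≤ m → V ^ (2^m) ≤ a m := by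
    intro V hV
    have h1 : ∀ᶠ m in atTop, (V:ℝ) ≤ (a m : ℝ) ^ ((1:ℝ)/2^m) :=
      hgrowth.eventually_ge_atTop (V:ℝ)
    obtain ⟨M, hM⟩ := h1.exists_forall_of_atTop
    refine ⟨M, fun m hm => ?_⟩
    have h2 := hM m hm
    have hapos : (0:ℝ) < (a m : ℝ) := by exact_mod_cast hpos m
    have hcast : ((2:ℝ)^m) = ((2^m : ℕ) : ℝ) := by push_cast; ring
    have hEne : ((2:ℝ)^m) ≠ 0 := by positivity
    have h3 : (V:ℝ) ^ ((2:ℝ)^m) ≤ ((a m : ℝ) ^ ((1:ℝ)/2^m)) ^ ((2:ℝ)^m) :=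
      Real.rpow_le_rpow (by positivity) h2 (by positivity)
    have h4 : ((a m : ℝ) ^ ((1:ℝ)/2^m)) ^ ((2:ℝ)^m) = (a m : ℝ) := by
      rw [← Real.rpow_mul hapos.le, one_div_mul_cancel hEne, Real.rpow_one]
    have h5 : (V:ℝ) ^ ((2:ℝ)^m) = ((V ^ (2^m) : ℕ) : ℝ) := by
      rw [hcast, Real.rpow_natCast]
      push_cast
      ring
    rw [h4, h5] at h3
    exact_mod_cast h3
  obtain ⟨M₀, hM₀⟩ := hgN 4 (by omega)
  -- rational data
  set q : ℕ := r.den with hq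
  have hq1 : 1 ≤ q := r.den_pos
  have hrpos : 0 < r := by
    have : (0:ℝ) < (r:ℝ) := by rw [hrS]; exact hSpos
    exact_mod_cast this
  set p' : ℕ := r.num.toNat with hp'
  have hnum : ((p':ℕ):ℝ) = ((r.num : ℤ) : ℝ) := by
    have h1 : (0:ℤ) ≤ r.num := by positivity
    rw [hp']
    exact_mod_cast Int.toNat_of_nonneg h1
  have hqS : (q:ℝ) * S = (p':ℝ) := by
    rw [← hrS, Rat.cast_def, hnum]
    have hd : ((r.den:ℕ):ℝ) ≠ 0 := by
      have := r.den_pos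
      positivity
    rw [hq]
    field_simp
  -- the key integrality estimate
  have key1 : ∀ n, (1:ℝ) ≤ (q:ℝ) * (∏ m ∈ pickSets a n, (a m:ℝ))
      * (S - ∑ m ∈ pickSets a n, f m) := by
    intro n
    set G : Finset ℕ := pickSets a n with hG
    set P : ℕ := ∏ m ∈ G, a m with hP
    have hPR : ((P:ℕ):ℝ) = ∏ m ∈ G, (a m:ℝ) := by
      rw [hP]; exact Nat.cast_prod _ _
    have hPpos : (0:ℝ) < (P:ℝ) := by
      have : 0 < P := Finset.prod_pos (fun m _ => hpos m)
      exact_mod_cast this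
    set T : ℝ := S - ∑ m ∈ G, f m with hT
    have hTtsum : T = ∑' (x : ↑((↑G : Set ℕ)ᶜ)), f ↑x := by
      have h1 : ∑ m ∈ G, f m + ∑' (x : ↑((↑G : Set ℕ)ᶜ)), f ↑x = ∑' m, f m :=
        Summable.sum_add_tsum_compl hsum
      rw [hT, hS]
      linarith
    have hTpos : 0 < T := by
      rw [hTtsum]
      have hmem : (pick a n) ∈ ((↑G : Set ℕ)ᶜ) := by
        simp only [Set.mem_compl_iff, Finset.coe_sort_coe, Set.mem_setOf_eq, Finset.mem_coe]
        exact hG ▸ pick_not_mem a n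
      exact Summable.tsum_pos (hsum.subtype _) (fun i => (hfpos i).le) ⟨pick a n, hmem⟩
        (hfpos (pick a n))
    set z : ℤ := (p':ℤ) * P - q * ∑ m ∈ G, ∏ k ∈ G.erase m, a k with hz
    have hzR : ((z:ℤ):ℝ) = (q:ℝ) * P * T := by
      have h1 : ∀ m ∈ G, ((P:ℕ):ℝ) * f m = ∏ k ∈ G.erase m, (a k:ℝ) := by
        intro m hm
        have h2 : (a m:ℝ) * ∏ k ∈ G.erase m, (a k:ℝ) = ((P:ℕ):ℝ) := by
          rw [hPR]; exact Finset.mul_prod_erase G (fun k => ((a k : ℕ):ℝ)) hm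
        have h3 : (a m:ℝ) ≠ 0 := by
          have := hpos m; positivity
        rw [hf]
        field_simp
        linarith [h2]
      have h4 : (q:ℝ) * P * T = (q:ℝ)*P*S - (q:ℝ) * ∑ m ∈ G, ((P:ℕ):ℝ) * f m := by
        rw [hT, ← Finset.mul_sum]
        ring
      have h5 : (q:ℝ)*P*S = (p':ℝ) * P := by
        have h6 : (q:ℝ)*S = (p':ℝ) := hqS
        nlinarith [h6]
      have h6 : ∑ m ∈ G, ((P:ℕ):ℝ) * f m = ∑ m ∈ G, ∏ k ∈ G.erase m, (a k:ℝ) :=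
        Finset.sum_congr rfl h1
      rw [h4, h5, h6, hz]
      push_cast
      ring
    have hzpos : (0:ℝ) < ((z:ℤ):ℝ) := by
      rw [hzR]
      have hqpos : (0:ℝ) < (q:ℝ) := by exact_mod_cast hq1
      positivity
    have hz1 : (1:ℤ) ≤ z := by
      have : (0:ℤ) < z := by exact_mod_cast hzpos
      omega
    have h7 : (1:ℝ) ≤ ((z:ℤ):ℝ) := by exact_mod_cast hz1
    rw [hzR] at h7
    rw [← hPR]
    exact h7
  -- translate into a purely arithmetic inequality
  have key2 : ∀ n, bb a n ≤ q * (max M₀ (Nat.log 2 (Nat.log 2 (bb a n) + 1) + 1) + 1)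
      * ∏ i ∈ Finset.range n, bb a i := by
    intro n
    have h1 := key1 n
    have h2 := tail_bound a hpos hsum M₀ hM₀ n
    set Mn : ℕ := max M₀ (Nat.log 2 (Nat.log 2 (bb a n) + 1) + 1) with hMn
    set b : ℕ := bb a n with hb
    set P : ℕ := ∏ m ∈ pickSets a n, a m with hP
    have hPR : ((P:ℕ):ℝ) = ∏ m ∈ pickSets a n, (a m:ℝ) := by
      rw [hP]; exact Nat.cast_prod _ _
    have hPb : P = ∏ i ∈ Finset.range n, bb a i := by
      rw [hP]; exact prod_pickSets a n
    have hb1 : 1 ≤ b := hpos (pick a n)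
    have hbR : (0:ℝ) < (b:ℝ) := by exact_mod_cast hb1
    have hqpos : (0:ℝ) < (q:ℝ) := by exact_mod_cast hq1
    have hPpos : (0:ℝ) < ((P:ℕ):ℝ) := by
      have : 0 < P := by
        rw [hP]; exact Finset.prod_pos (fun m _ => hpos m)
      exact_mod_cast this
    -- h2 : S - head ≤ (Mn+1)/b  (note tail_bound's sum uses 1/(a m), same as f)
    have h2' : S - ∑ m ∈ pickSets a n, f m ≤ ((Mn + 1 : ℕ):ℝ) / (b:ℝ) := by
      rw [hS, hf]
      convert h2 using 3
    have h3 : (1:ℝ) ≤ (q:ℝ) * P * (((Mn + 1 : ℕ):ℝ) / (b:ℝ)) := by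
      calc (1:ℝ) ≤ (q:ℝ) * (∏ m ∈ pickSets a n, (a m:ℝ)) * (S - ∑ m ∈ pickSets a n, f m) := h1
        _ = (q:ℝ) * P * (S - ∑ m ∈ pickSets a n, f m) := by rw [hPR]
        _ ≤ (q:ℝ) * P * (((Mn + 1 : ℕ):ℝ) / (b:ℝ)) := by
            apply mul_le_mul_of_nonneg_left h2' (by positivity)
    have h4 : (b:ℝ) ≤ (q:ℝ) * P * ((Mn + 1 : ℕ):ℝ) := by
      have h5 : (q:ℝ) * P * (((Mn + 1 : ℕ):ℝ) / (b:ℝ)) = ((q:ℝ) * P * ((Mn + 1:ℕ):ℝ)) / (b:ℝ) := by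
        ring
      rw [h5, le_div_iff₀ hbR, one_mul] at h3
      exact h3
    have h6 : (b:ℕ) ≤ q * P * (Mn + 1) := by exact_mod_cast h4
    calc b ≤ q * P * (Mn + 1) := h6
      _ = q * (Mn + 1) * P := by ring
      _ = q * (Mn + 1) * ∏ i ∈ Finset.range n, bb a i := by rw [hPb]
  -- logarithmic recursion
  set β : ℕ → ℕ := fun i => Nat.log 2 (bb a i) with hβ
  have key3 : ∀ n, β n ≤ (q + M₀ + 2) + n + Nat.log 2 (β n + 1) + ∑ i ∈ Finset.range n, β i := by
    intro n
    have h1 := key2 n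
    set Mn : ℕ := max M₀ (Nat.log 2 (Nat.log 2 (bb a n) + 1) + 1) with hMn
    set σn : ℕ := ∑ i ∈ Finset.range n, β i with hσn
    have h2 : ∏ i ∈ Finset.range n, bb a i ≤ 2^(σn + n) := by
      have h3 : ∀ i ∈ Finset.range n, bb a i ≤ 2^(β i + 1) := by
        intro i _
        exact (Nat.lt_pow_succ_log_self (by omega) _).le
      calc ∏ i ∈ Finset.range n, bb a i ≤ ∏ i ∈ Finset.range n, 2^(β i + 1) :=
            Finset.prod_le_prod' h3
        _ = 2^(∑ i ∈ Finset.range n, (β i + 1)) := by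
            rw [← Finset.prod_pow_eq_pow_sum]
        _ = 2^(σn + n) := by
            congr 1
            rw [Finset.sum_add_distrib, Finset.sum_const, Finset.card_range, smul_eq_mul, mul_one]
    have h4 : q ≤ 2^q := (Nat.lt_two_pow_self (n := q)).le
    have h5 : Mn + 1 ≤ 2^(Mn+1) := (Nat.lt_two_pow_self (n := Mn+1)).le
    have h6 : bb a n ≤ 2^(q + (Mn + 1) + (σn + n)) := by
      calc bb a n ≤ q * (Mn + 1) * ∏ i ∈ Finset.range n, bb a i := h1
        _ ≤ 2^q * 2^(Mn+1) * 2^(σn + n) := by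
            apply Nat.mul_le_mul (Nat.mul_le_mul h4 h5) h2
        _ = 2^(q + (Mn + 1) + (σn + n)) := by
            rw [← pow_add, ← pow_add]
    have h7 : β n ≤ q + (Mn + 1) + (σn + n) := by
      calc β n = Nat.log 2 (bb a n) := rfl
        _ ≤ Nat.log 2 (2^(q + (Mn + 1) + (σn + n))) := Nat.log_mono_right h6
        _ = q + (Mn + 1) + (σn + n) := Nat.log_pow (by omega) _
    have hpt : Nat.log 2 (β n + 1) = Nat.log 2 (Nat.log 2 (bb a n) + 1) := rfl
    have h8 : Mn ≤ M₀ + (Nat.log 2 (β n + 1) + 1) := by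
      rw [hMn, hpt]
      exact max_le (by omega) (by omega)
    omega
  obtain ⟨D, hD⟩ := abstract_rec β (q + M₀ + 2) key3
  -- growth of bb
  have key4 : ∀ V : ℕ, 2 ≤ V → ∃ N, ∀ n, N ≤ n → V^(2^n) ≤ bb a n := by
    intro V hV
    obtain ⟨Mv, hMv⟩ := hgN V hV
    refine ⟨Mv, fun n hn => ?_⟩
    by_contra h'
    push_neg at h'
    have hmap : ∀ i ∈ Finset.range (n+1), pick a i ∈ Finset.range n := by
      intro i hi
      rw [Finset.mem_range] at hi ⊢
      by_contra h2
      push_neg at h2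
      have h3 : V^(2^n) ≤ V^(2^(pick a i)) :=
        Nat.pow_le_pow_right (by omega) (Nat.pow_le_pow_right (by omega) h2)
      have h4 : V^(2^(pick a i)) ≤ a (pick a i) := hMv _ (le_trans hn h2)
      have h5 : bb a i ≤ bb a n := bb_mono a (by omega)
      have h6 : bb a i < V^(2^n) := lt_of_le_of_lt h5 h'
      rw [bb] at h6
      omega
    have hinj : Set.InjOn (pick a) ↑(Finset.range (n+1)) := by
      intro i _ j _ hij
      by_contra hne
      rcases Nat.lt_or_ge i j with h | h
      · exact pick_injOn a h hij
      · have h9 : j < i := by omega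
        exact pick_injOn a h9 hij.symm
    have hcard := Finset.card_le_card_of_injOn (pick a) hmap hinj
    simp only [Finset.card_range] at hcard
    omega
  -- final contradiction
  obtain ⟨N, hN⟩ := key4 (2^(D+2)) (by
    have : (2:ℕ) = 2^1 := rfl
    calc (2:ℕ) = 2^1 := rfl
      _ ≤ 2^(D+2) := Nat.pow_le_pow_right (by omega) (by omega))
  have h1 : (2^(D+2):ℕ)^(2^N) ≤ bb a N := hN N (le_refl N)
  have h2 : bb a N < 2^(D * 2^N + 1) := by
    have h3 : bb a N < 2^(β N + 1) := Nat.lt_pow_succ_log_self (by omega) _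
    have h4 : β N + 1 ≤ D * 2^N + 1 := by
      have := hD N
      omega
    exact lt_of_lt_of_le h3 (Nat.pow_le_pow_right (by omega) h4)
  have h5 : (2^(D+2):ℕ)^(2^N) = 2^((D+2) * 2^N) := by
    rw [← pow_mul]
  have h6 : (D+2) * 2^N < D * 2^N + 1 := by
    have h7 : 2^((D+2) * 2^N) < 2^(D * 2^N + 1) := by
      rw [← h5]
      omega
    exact (Nat.pow_lt_pow_iff_right (by omega)).mp h7
  have h8 : (1:ℕ) ≤ 2^N := Nat.one_le_two_pow
  nlinarith [h6, h8]
end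

section
/- Let β ≥ 0 be real and (a_n) a sequence of positive integers with |a_n²/a_{n+1} − β| ≤ 1/3 for all n and r = ∑_{n=1}^∞ 1/a_n < ∞. Then for every n with a_n ≥ 8(β + 1/3)², we have a_n = ⌊(r − ∑_{k=1}^{n−1} 1/a_k)^{−1} + β⌉, where ⌊x⌉ = ⌊x + 1/2⌋ denotes the nearest integer to x. -/
open Filter Finset

set_option maxHeartbeats 4000000 in
theorem main_theorem_floor_formula
    (β : ℝ) (hβ : 0 ≤ β)
    (a : ℕ → ℕ) (hpos : ∀ n, 0 < a n)
    (hratio : ∀ n, |(a n : ℝ) ^ 2 / (a (n + 1) : ℝ) - β| ≤ 1 / 3)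
    (hsum : Summable (fun n => 1 / (a n : ℝ)))
    (r : ℝ) (hr : r = ∑' n, 1 / (a n : ℝ)) :
    ∀ n, 8 * (β + 1 / 3) ^ 2 ≤ (a n : ℝ) →
      (a n : ℤ) = round ((r - ∑ k ∈ Finset.range n, 1 / (a k : ℝ))⁻¹ + β) := by
  intro n hAn
  obtain ⟨c, hc_def⟩ : ∃ c:ℝ, c = β + 1/3 := ⟨_, rfl⟩
  have hc : (1:ℝ)/3 ≤ c := by rw [hc_def]; linarith
  have hc0 : (0:ℝ) < c := by linarith
  have hpR : ∀ m, (0:ℝ) < (a m : ℝ) := fun m => by exact_mod_cast hpos m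
  -- step inequalities
  have hstep : ∀ m, ((a m:ℝ))^2 ≤ c * (a (m+1):ℝ) ∧ (β - 1/3) * (a (m+1):ℝ) ≤ ((a m:ℝ))^2 := by
    intro m
    have h := abs_le.1 (hratio m)
    have hb := hpR (m+1)
    constructor
    · have h2 : ((a m:ℝ))^2 / (a (m+1):ℝ) ≤ c := by rw [hc_def]; linarith [h.2]
      calc ((a m:ℝ))^2 = ((a m:ℝ))^2 / (a (m+1):ℝ) * (a (m+1):ℝ) := by field_simp
        _ ≤ c * (a (m+1):ℝ) := mul_le_mul_of_nonneg_right h2 hb.le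
    · have h1 : β - 1/3 ≤ ((a m:ℝ))^2 / (a (m+1):ℝ) := by linarith [h.1]
      calc (β - 1/3) * (a (m+1):ℝ) ≤ ((a m:ℝ))^2 / (a (m+1):ℝ) * (a (m+1):ℝ) :=
            mul_le_mul_of_nonneg_right h1 hb.le
        _ = ((a m:ℝ))^2 := by field_simp
  obtain ⟨A, hA_def⟩ : ∃ A:ℝ, A = (a n : ℝ) := ⟨_, rfl⟩
  obtain ⟨B, hB_def⟩ : ∃ B:ℝ, B = (a (n+1) : ℝ) := ⟨_, rfl⟩
  have hA0 : 0 < A := hA_def ▸ hpR n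
  have hB0 : 0 < B := hB_def ▸ hpR (n+1)
  have hAn' : 8 * c^2 ≤ A := by rw [hA_def, hc_def]; exact hAn
  have hcB : A^2 ≤ c * B := by rw [hA_def, hB_def]; exact (hstep n).1
  have hb2 : (β - 1/3) * B ≤ A^2 := by rw [hA_def, hB_def]; exact (hstep n).2
  have hB64 : 64 * c^3 ≤ B := by nlinarith [sq_nonneg A, sq_nonneg c, mul_pos hc0 hc0]
  have hcB' : c < B := by nlinarith [sq_nonneg (c - 1/3), mul_pos hc0 hc0]
  -- geometric growth from n+1 with ratio M = B / c
  obtain ⟨M, hM_def⟩ : ∃ M:ℝ, M = B / c := ⟨_, rfl⟩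
  have hM1 : 1 < M := by rw [hM_def, lt_div_iff₀ hc0]; linarith
  have hM7 : 64 * c^2 ≤ M := by
    rw [hM_def, le_div_iff₀ hc0]; nlinarith
  have hgeo : ∀ k, B * M^k ≤ (a (k + (n+1)) : ℝ) := by
    intro k
    induction k with
    | zero => simp [hB_def]
    | succ k ih =>
      have hx0 : (0:ℝ) < (a (k + (n+1)) : ℝ) := hpR _
      have hs := (hstep (k + (n+1))).1
      have hMk : (1:ℝ) ≤ M^k := one_le_pow₀ hM1.le
      have hBx : B ≤ (a (k + (n+1)) : ℝ) := le_trans (by nlinarith) ih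
      have key : B * M^(k+1) ≤ (a (k + (n+1) + 1) : ℝ) := by
        have h2 : B * M^k * ((a (k + (n+1)):ℝ)) ≤ ((a (k + (n+1)):ℝ))^2 := by nlinarith
        have h3 : B * M^k * B ≤ B * M^k * ((a (k + (n+1)):ℝ)) :=
          mul_le_mul_of_nonneg_left hBx (by positivity)
        have h4 : B * M^k * B ≤ c * (a (k + (n+1) + 1):ℝ) := by linarith
        rw [pow_succ]
        calc B * (M^k * M) = (B * M^k * B) / c := by rw [hM_def]; field_simp
          _ ≤ (c * (a (k + (n+1) + 1):ℝ)) / c := by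
              apply div_le_div_of_nonneg_right h4 hc0.le
          _ = (a (k + (n+1) + 1):ℝ) := by field_simp
      have he : k + 1 + (n+1) = k + (n+1) + 1 := by omega
      rw [he]
      exact key
  -- tail sums
  have hs1 : Summable (fun k => 1 / (a (k + (n+1)) : ℝ)) := (summable_nat_add_iff (n+1)).2 hsum
  have hs0 : Summable (fun k => 1 / (a (k + n) : ℝ)) := (summable_nat_add_iff n).2 hsum
  obtain ⟨t, ht_def⟩ : ∃ t:ℝ, t = ∑' k, 1 / (a (k + (n+1)) : ℝ) := ⟨_, rfl⟩
  have ht_lb : 1/B ≤ t := by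
    rw [ht_def]
    have := Summable.le_tsum hs1 0 (fun i _ => by positivity)
    simpa [hB_def] using this
  have ht0 : 0 < t := lt_of_lt_of_le (by positivity) ht_lb
  -- upper bound on tail via geometric series
  have hq0 : (0:ℝ) ≤ 1/M := by positivity
  have hq1 : 1/M < 1 := by rw [div_lt_one (by linarith)]; exact hM1
  have hgsum : Summable (fun k : ℕ => (1/B) * (1/M)^k) :=
    (summable_geometric_of_lt_one hq0 hq1).mul_left _
  have ht_ub : t ≤ (1/B) * (1 - 1/M)⁻¹ := by
    rw [ht_def]
    have hle : ∀ k : ℕ, 1 / (a (k + (n+1)) : ℝ) ≤ (1/B) * (1/M)^k := by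
      intro k
      have hBM : 0 < B * M^k := by positivity
      have h1 : 1 / (a (k + (n+1)) : ℝ) ≤ 1 / (B * M^k) :=
        one_div_le_one_div_of_le hBM (hgeo k)
      calc 1 / (a (k + (n+1)) : ℝ) ≤ 1 / (B * M^k) := h1
        _ = (1/B) * (1/M)^k := by rw [div_pow]; field_simp; simp
    calc (∑' k, 1 / (a (k + (n+1)) : ℝ)) ≤ ∑' k, (1/B) * (1/M)^k :=
          Summable.tsum_le_tsum hle hs1 hgsum
      _ = (1/B) * (1 - 1/M)⁻¹ := by
          rw [tsum_mul_left, tsum_geometric_of_lt_one hq0 hq1]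
  -- key upper estimate : A^2 * t ≤ c + 1/6
  have hBc : 0 < B - c := by linarith
  have hub' : (1 - 1/M)⁻¹ = B / (B - c) := by
    rw [hM_def]
    rw [show (1 : ℝ) - 1/(B/c) = (B - c)/B by field_simp]
    rw [inv_div]
  have ht_ub2 : t ≤ 1 / (B - c) := by
    rw [hub'] at ht_ub
    calc t ≤ (1/B) * (B/(B-c)) := ht_ub
      _ = 1 / (B - c) := by field_simp
  have key_ub : A^2 * t ≤ c + 1/6 := by
    have h1 : A^2 * t ≤ A^2 * (1/(B-c)) :=
      mul_le_mul_of_nonneg_left ht_ub2 (by positivity)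
    have h2 : A^2 * (1/(B-c)) ≤ c + 1/6 := by
      rw [mul_one_div, div_le_iff₀ hBc]
      nlinarith [sq_nonneg (c - 1/3), mul_pos hc0 hc0, mul_pos (mul_pos hc0 hc0) hc0]
    linarith
  -- identify the remainder as 1/A + t
  have hsplit : r - ∑ k ∈ Finset.range n, 1 / (a k : ℝ) = 1/A + t := by
    have h1 : (∑ k ∈ Finset.range n, 1 / (a k : ℝ)) + (∑' k, 1 / (a (k + n) : ℝ))
        = ∑' k, 1 / (a k : ℝ) := Summable.sum_add_tsum_nat_add n hsum
    have h2 : (∑' k, 1 / (a (k + n) : ℝ))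
        = 1 / (a (0 + n) : ℝ) + ∑' k, 1 / (a ((k + 1) + n) : ℝ) := Summable.tsum_eq_zero_add hs0
    have h3 : (∑' k, 1 / (a ((k + 1) + n) : ℝ)) = ∑' k, 1 / (a (k + (n+1)) : ℝ) :=
      tsum_congr (fun k => by rw [show k + 1 + n = k + (n+1) by omega])
    rw [hr, ← h1, h2, h3, ← ht_def, hA_def]
    simp
  rw [hsplit]
  -- rewrite the inverse
  have hD : 0 < 1 + A * t := by positivity
  have hSinv : (1/A + t)⁻¹ = A / (1 + A * t) := by
    rw [show 1/A + t = (1 + A*t)/A by field_simp, inv_div]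
  rw [hSinv]
  -- final bounds
  have hAt0 : 0 < A * t := by positivity
  have bound_low : A - 1/2 ≤ A / (1 + A*t) + β := by
    have h1 : (A - 1/2 - β) * (1 + A*t) ≤ A := by
      have hbc : β + 1/2 = c + 1/6 := by rw [hc_def]; ring
      nlinarith [key_ub, mul_nonneg (show (0:ℝ) ≤ β + 1/2 by linarith) hAt0.le]
    have h2 : A - 1/2 - β ≤ A / (1 + A*t) := by
      rw [le_div_iff₀ hD]; exact h1
    linarith
  have bound_high : A / (1 + A*t) + β < A + 1/2 := by
    have hBt : 1 ≤ B * t := by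
      have := mul_le_mul_of_nonneg_left ht_lb hB0.le
      calc (1:ℝ) = B * (1/B) := by field_simp
        _ ≤ B * t := this
    have hB8 : 8 * c * A ≤ B := by nlinarith
    have h1 : A < (A - c + 5/6) * (1 + A*t) := by
      have hcB2 : (c - 2/3) * B ≤ A^2 := by rw [hc_def]; linarith
      have hA2t : (c - 2/3) * B * t ≤ A^2 * t := mul_le_mul_of_nonneg_right hcB2 ht0.le
      have h8At : 8 * c * A * t ≤ B * t := mul_le_mul_of_nonneg_right hB8 ht0.le
      rcases le_or_gt (5/6 : ℝ) c with hcase | hcase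
      · have hprod : 0 ≤ (c - 5/6) * (B * t - 1) :=
          mul_nonneg (by linarith) (by linarith)
        nlinarith [hprod, hA2t, h8At, hBt, hAt0]
      · nlinarith [mul_pos (show (0:ℝ) < 5/6 - c by linarith) hD,
          mul_pos (mul_pos hA0 hA0) ht0]
    have h2 : A / (1 + A*t) < A - c + 5/6 := by
      rw [div_lt_iff₀ hD]; exact h1
    have : β = c - 1/3 := by rw [hc_def]; ring
    linarith
  -- conclude with round
  rw [round_eq]
  symm
  rw [Int.floor_eq_iff]
  constructor
  · push_cast
    rw [← hA_def]
    linarith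
  · push_cast
    rw [← hA_def]
    linarith
end

section
/- Let β ≥ 0 and (a_n) a sequence of positive integers with |a_n²/a_{n+1} − β| ≤ 1/3 for all n, r = ∑ 1/a_n < ∞, and lim_{n→∞} a_n²/a_{n+1} = β. Then lim_{n→∞} |(r − ∑_{k=1}^{n−1} 1/a_k)^{−1} + β − a_n| = 0. -/
open Filter Finset

set_option maxHeartbeats 1000000 in
theorem main_theorem_limit
    (β : ℝ) (hβ : 0 ≤ β)
    (a : ℕ → ℕ) (hpos : ∀ n, 0 < a n)
    (hratio : ∀ n, |(a n : ℝ) ^ 2 / (a (n + 1) : ℝ) - β| ≤ 1 / 3)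
    (hsum : Summable (fun n => 1 / (a n : ℝ)))
    (hlim : Tendsto (fun n => (a n : ℝ) ^ 2 / (a (n + 1) : ℝ)) atTop (nhds β))
    (r : ℝ) (hr : r = ∑' n, 1 / (a n : ℝ)) :
    Tendsto (fun n =>
      |(r - ∑ k ∈ Finset.range n, 1 / (a k : ℝ))⁻¹ + β - (a n : ℝ)|) atTop (nhds 0) := by
  have hpos' : ∀ n, (0:ℝ) < a n := fun n => by exact_mod_cast hpos n
  have hb3 : (0:ℝ) < β + 1/3 := by linarith
  -- growth inequality
  have hgrow : ∀ n, (a n:ℝ)^2 ≤ (β + 1/3) * a (n+1) := by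
    intro n
    have h := (abs_le.mp (hratio n)).2
    have h2 := hpos' (n+1)
    rw [sub_le_iff_le_add, div_le_iff₀ h2] at h
    nlinarith
  -- 1/a → 0 and a → ∞
  have hinv : Tendsto (fun n => 1 / (a n : ℝ)) atTop (nhds 0) := hsum.tendsto_atTop_zero
  have hatop : Tendsto (fun n => (a n : ℝ)) atTop atTop := by
    have h1 : Tendsto (fun n => 1 / (a n : ℝ)) atTop (nhdsWithin 0 (Set.Ioi 0)) :=
      tendsto_nhdsWithin_of_tendsto_nhds_of_eventually_within _ hinv
        (Eventually.of_forall fun n => Set.mem_Ioi.mpr (one_div_pos.mpr (hpos' n)))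
    have h2 := h1.inv_tendsto_nhdsGT_zero
    refine h2.congr fun n => ?_
    simp
  -- tails
  have hT : ∀ n, Summable (fun k => 1 / (a (k + n) : ℝ)) :=
    fun n => (summable_nat_add_iff n).mpr hsum
  set T : ℕ → ℝ := fun n => ∑' k, 1 / (a (k + n) : ℝ) with hTdef
  have hTpartial : ∀ n, r - ∑ k ∈ Finset.range n, 1 / (a k : ℝ) = T n := by
    intro n
    rw [hr, ← Summable.sum_add_tsum_nat_add n hsum]
    ring
  have hTrec : ∀ n, T n = 1 / a n + T (n+1) := by
    intro n
    have h0 := Summable.tsum_eq_zero_add (hT n)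
    simp only [hTdef]
    rw [h0, zero_add]
    congr 1
    apply tsum_congr
    intro k
    have hk : k + 1 + n = k + (n + 1) := by omega
    rw [hk]
  have hTge : ∀ n, 1 / (a n : ℝ) ≤ T n := by
    intro n
    have h0 := Summable.le_tsum (hT n) 0 (fun j _ => le_of_lt (one_div_pos.mpr (hpos' _)))
    simp only [Nat.zero_add] at h0
    exact h0
  have hTnonneg : ∀ n, 0 ≤ T n := fun n => tsum_nonneg fun i => le_of_lt (one_div_pos.mpr (hpos' _))
  have hTpos : ∀ n, 0 < T n := fun n => lt_of_lt_of_le (one_div_pos.mpr (hpos' n)) (hTge n)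
  -- doubling and geometric bound on tails
  obtain ⟨N, hN⟩ : ∃ N, ∀ k, N ≤ k → 2*(β + 1/3) ≤ (a k : ℝ) :=
    (hatop.eventually_ge_atTop (2*(β+1/3))).exists_forall_of_atTop
  have hdouble : ∀ k, N ≤ k → 2 * (a k:ℝ) ≤ a (k+1) := by
    intro k hk
    have h1 := hgrow k
    have h2 := hN k hk
    have h3 := hpos' k
    nlinarith
  have hgeom : ∀ m, N ≤ m → ∀ j, 2^j * (a m:ℝ) ≤ a (j + m) := by
    intro m hm j
    induction j with
    | zero => simp
    | succ j ih =>
      have h1 : 2 * (a (j + m):ℝ) ≤ a (j + m + 1) := hdouble _ (le_trans hm (Nat.le_add_left m j))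
      have : (j + 1 + m) = (j + m) + 1 := by omega
      rw [this]
      calc 2^(j+1) * (a m:ℝ) = 2 * (2^j * a m) := by ring
        _ ≤ 2 * (a (j+m):ℝ) := by nlinarith [hpos' m]
        _ ≤ _ := h1
  have hTbound : ∀ m, N ≤ m → T m ≤ 2 / a m := by
    intro m hm
    have hle : ∀ j, 1 / (a (j + m) : ℝ) ≤ (1/2)^j * (1 / a m) := by
      intro j
      have h1 := hgeom m hm j
      have h2 : (0:ℝ) < 2^j * a m := mul_pos (by positivity) (hpos' m)
      have h3 : 1 / (a (j + m):ℝ) ≤ 1 / (2^j * a m) :=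
        one_div_le_one_div_of_le h2 h1
      calc 1 / (a (j + m):ℝ) ≤ 1 / (2^j * a m) := h3
        _ = (1/2)^j * (1 / a m) := by
          rw [div_pow, one_pow, div_mul_div_comm, one_mul]
    have hsg : Summable (fun j : ℕ => (1/2:ℝ)^j * (1 / a m)) :=
      (summable_geometric_of_lt_one (by norm_num) (by norm_num)).mul_right _
    calc T m ≤ ∑' j, (1/2:ℝ)^j * (1 / a m) := Summable.tsum_le_tsum hle (hT m) hsg
      _ = (∑' j, (1/2:ℝ)^j) * (1 / a m) := tsum_mul_right
      _ = 2 / a m := by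
        rw [tsum_geometric_of_lt_one (by norm_num) (by norm_num), mul_one_div]
        norm_num
  -- g
  set g : ℕ → ℝ := fun n => (a n:ℝ)^2 * T n - a n with hgdef
  have hgeq : ∀ n, g n = (a n:ℝ)^2 / a (n+1) + (a n:ℝ)^2 * T (n+2) := by
    intro n
    have h1 : T n = 1 / a n + (1 / a (n+1) + T (n+2)) := by rw [hTrec n, hTrec (n+1)]
    simp only [hgdef]
    rw [h1]
    have h2 := (hpos' n).ne'
    have h3 := (hpos' (n+1)).ne'
    field_simp
    ring
  have hB : Tendsto (fun n => (a n:ℝ)^2 * T (n+2)) atTop (nhds 0) := by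
    have hup : Tendsto (fun n => 2*(β+1/3)^2 / (a (n+1):ℝ)) atTop (nhds 0) := by
      apply Tendsto.div_atTop tendsto_const_nhds
      exact hatop.comp (tendsto_add_atTop_nat 1)
    apply tendsto_of_tendsto_of_tendsto_of_le_of_le' tendsto_const_nhds hup
    · exact Eventually.of_forall fun n => mul_nonneg (by positivity) (hTnonneg _)
    · filter_upwards [eventually_ge_atTop N] with n hn
      have hT2 : T (n+2) ≤ 2 / a (n+2) := hTbound (n+2) (by omega)
      have h1 := hgrow n
      have h2 := hgrow (n+1)
      have p1 := hpos' n
      have p2 := hpos' (n+1)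
      have p3 := hpos' (n+2)
      calc (a n:ℝ)^2 * T (n+2) ≤ ((β+1/3) * a (n+1)) * (2 / a (n+2)) := by
            apply mul_le_mul h1 hT2 (hTnonneg _) (le_of_lt (mul_pos hb3 p2))
        _ = 2*(β+1/3) * ((a (n+1):ℝ) / a (n+2)) := by ring
        _ ≤ 2*(β+1/3) * ((β+1/3) / a (n+1)) := by
            apply mul_le_mul_of_nonneg_left _ (by linarith)
            rw [div_le_div_iff₀ p3 p2]
            nlinarith
        _ = 2*(β+1/3)^2 / (a (n+1):ℝ) := by ring
  have hg : Tendsto g atTop (nhds β) := by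
    have := hlim.add hB
    rw [add_zero] at this
    exact this.congr fun n => (hgeq n).symm
  have hgnonneg : ∀ n, 0 ≤ g n := by
    intro n
    have h1 := hTge n
    have h2 := hpos' n
    have hne : (a n:ℝ) ≠ 0 := h2.ne'
    have h3 : (a n:ℝ)^2 * (1/(a n:ℝ)) = a n := by field_simp
    have h4 := mul_le_mul_of_nonneg_left h1 (sq_nonneg ((a n:ℝ)))
    simp only [hgdef]
    nlinarith
  -- main identity
  have hiden : ∀ n, (T n)⁻¹ + β - (a n:ℝ) = (β - g n) + (g n)^2 / (g n + a n) := by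
    intro n
    have h1 : g n + (a n:ℝ) = (a n:ℝ)^2 * T n := by simp only [hgdef]; ring
    have h2 : (T n) ≠ 0 := (hTpos n).ne'
    have h3 : (a n:ℝ) ≠ 0 := (hpos' n).ne'
    rw [h1]
    simp only [hgdef]
    field_simp
    ring
  -- conclude
  have hC : Tendsto (fun n => (g n)^2 / (g n + a n)) atTop (nhds 0) := by
    have hup : Tendsto (fun n => (g n)^2 * (1 / a n)) atTop (nhds 0) := by
      have := (hg.mul hg).mul hinv
      rw [mul_zero] at this
      exact this.congr fun n => by ring
    apply tendsto_of_tendsto_of_tendsto_of_le_of_le' tendsto_const_nhds hup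
    · exact Eventually.of_forall fun n => by
        have h1 := hgnonneg n
        have h2 := hpos' n
        apply div_nonneg (by positivity) (by linarith)
    · refine Eventually.of_forall fun n => ?_
      have h1 := hgnonneg n
      have h2 := hpos' n
      rw [mul_one_div]
      apply div_le_div_of_nonneg_left (by positivity) h2
      linarith
  have hmain : Tendsto (fun n => (T n)⁻¹ + β - (a n:ℝ)) atTop (nhds 0) := by
    have hsub : Tendsto (fun n => β - g n) atTop (nhds (β - β)) :=
      (tendsto_const_nhds (x := β)).sub hg
    have hmain0 : Tendsto (fun n => (β - g n) + (g n)^2 / (g n + a n)) atTop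
        (nhds ((β - β) + 0)) := hsub.add hC
    rw [sub_self, add_zero] at hmain0
    exact (hmain0.congr fun n => (hiden n).symm)
  have habs := hmain.abs
  rw [abs_zero] at habs
  refine habs.congr fun n => ?_
  rw [hTpartial n]
end

section
/- If (a_n) is a sequence of positive integers satisfying 2/3 ≤ a_n²/a_{n+1} ≤ 4/3 for all n and ∑_{n=1}^∞ 1/a_n = 1, then a_n = s_n for all n, where (s_n) is the Sylvester sequence defined by s_1 = 2, s_{n+1} = s_n² − s_n + 1. -/
open Filter Finset

set_option maxHeartbeats 2000000 in
theorem sylvester_characterization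
    (s : ℕ → ℕ) (hs0 : s 0 = 2) (hsrec : ∀ n, s (n + 1) = (s n) ^ 2 - s n + 1)
    (a : ℕ → ℕ) (hpos : ∀ n, 0 < a n)
    (hlow : ∀ n, (2 : ℝ) / 3 ≤ (a n : ℝ) ^ 2 / (a (n + 1) : ℝ))
    (hhigh : ∀ n, (a n : ℝ) ^ 2 / (a (n + 1) : ℝ) ≤ 4 / 3)
    (hsum : ∑' n, 1 / (a n : ℝ) = 1) :
    ∀ n, a n = s n := by
  have hApos : ∀ n, (0:ℝ) < (a n : ℝ) := fun n => by exact_mod_cast hpos n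
  have hfpos : ∀ n, (0:ℝ) < 1 / (a n : ℝ) := fun n => one_div_pos.2 (hApos n)
  have hsumm : Summable (fun n => 1 / (a n : ℝ)) := by
    by_contra h
    rw [tsum_eq_zero_of_not_summable h] at hsum
    norm_num at hsum
  set T : ℕ → ℝ := fun n => ∑' k, 1 / (a (k + n) : ℝ) with hTdef
  have hsummT : ∀ n, Summable (fun k => 1 / (a (k + n) : ℝ)) := fun n =>
    (summable_nat_add_iff (f := fun n => 1 / (a n : ℝ)) n).2 hsumm
  have hT0 : T 0 = 1 := by
    rw [hTdef]; simpa using hsum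
  have hTrec : ∀ n, T n = 1 / (a n : ℝ) + T (n+1) := by
    intro n
    have h1 := Summable.tsum_eq_zero_add (hsummT n)
    calc T n = 1 / (a (0 + n):ℝ) + ∑' k, 1 / (a (k + 1 + n) : ℝ) := h1
    _ = 1 / (a n : ℝ) + T (n+1) := by
        rw [Nat.zero_add]
        congr 1
        exact tsum_congr (fun k => by rw [show k + 1 + n = k + (n+1) from by omega])
  have hTle1 : ∀ n, T n ≤ 1 := by
    intro n
    have h := Summable.sum_add_tsum_nat_add (f := fun k => 1 / (a k : ℝ)) n hsumm
    rw [hsum] at h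
    have hnn : (0:ℝ) ≤ ∑ i ∈ range n, 1 / (a i : ℝ) := by positivity
    simp only [hTdef]
    linarith
  have hTpos : ∀ n, 0 < T n := fun n =>
    Summable.tsum_pos (hsummT n) (fun i => (hfpos _).le) 0 (hfpos _)
  have hflt : ∀ n, 1 / (a n : ℝ) < T n := by
    intro n
    rw [hTrec n]
    linarith [hTpos (n+1)]
  have ha2 : ∀ n, (2:ℝ) ≤ (a n : ℝ) := by
    intro n
    have h1 : 1 / (a n : ℝ) < 1 := lt_of_lt_of_le (hflt n) (hTle1 n)
    have h2 : (1:ℝ) < (a n : ℝ) := by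
      rw [div_lt_one (hApos n)] at h1; exact h1
    have : 1 < a n := by exact_mod_cast h2
    exact_mod_cast this
  have L1 : ∀ n, 3 * (a n:ℝ)^2 ≤ 4 * (a (n+1):ℝ) := by
    intro n
    have h := hhigh n
    rw [div_le_div_iff₀ (hApos (n+1)) (by norm_num : (0:ℝ) < 3)] at h
    linarith
  have ha3 : ∀ n, (3:ℝ) ≤ (a (n+1) : ℝ) := by
    intro n
    nlinarith [L1 n, ha2 n]
  have hstep : ∀ n, 1/(a (n+1):ℝ) ≤ (4/3) * (1/(a n:ℝ))^2 := by
    intro n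
    have e : (4/3:ℝ) * (1/(a n:ℝ))^2 = 4 / (3*(a n:ℝ)^2) := by
      field_simp
    rw [e, div_le_div_iff₀ (hApos (n+1)) (by nlinarith [hApos n])]
    linarith [L1 n]
  have hf13 : ∀ n, 1/(a (n+1):ℝ) ≤ 1/3 := by
    intro n
    rw [div_le_div_iff₀ (hApos (n+1)) (by norm_num : (0:ℝ) < 3)]
    linarith [ha3 n]
  have hgeo : ∀ m k, 1/(a (k + (m+1)):ℝ) ≤ (1/(a (m+1):ℝ)) * (4/9)^k := by
    intro m k
    induction k with
    | zero => simp
    | succ k ih =>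
      have hidx : k + 1 + (m+1) = (k + (m+1)) + 1 := by omega
      rw [hidx]
      have hidx2 : k + (m+1) = (k + m) + 1 := by omega
      have h13 : 1/(a (k + (m+1)):ℝ) ≤ 1/3 := by rw [hidx2]; exact hf13 (k+m)
      calc 1/(a ((k + (m+1)) + 1):ℝ) ≤ (4/3) * (1/(a (k+(m+1)):ℝ))^2 := hstep _
      _ ≤ (4/9) * (1/(a (k+(m+1)):ℝ)) := by nlinarith [hfpos (k+(m+1))]
      _ ≤ (4/9) * ((1/(a (m+1):ℝ)) * (4/9)^k) := by
          apply mul_le_mul_of_nonneg_left ih (by norm_num)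
      _ = (1/(a (m+1):ℝ)) * (4/9)^(k+1) := by ring
  have hT95 : ∀ m, T (m+1) ≤ (9/5) * (1/(a (m+1):ℝ)) := by
    intro m
    have hg : Summable (fun k => (1/(a (m+1):ℝ)) * (4/9:ℝ)^k) :=
      (summable_geometric_of_lt_one (by norm_num) (by norm_num)).mul_left _
    have h := Summable.tsum_le_tsum (hgeo m) (hsummT (m+1)) hg
    rw [tsum_mul_left, tsum_geometric_of_lt_one (by norm_num) (by norm_num)] at h
    simp only [hTdef]
    calc (∑' k, 1/(a (k + (m+1)):ℝ)) ≤ (1/(a (m+1):ℝ)) * (1 - 4/9)⁻¹ := h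
    _ = (9/5) * (1/(a (m+1):ℝ)) := by ring_nf
  have hT125 : ∀ m, T (m+1) ≤ 1/(a (m+1):ℝ) + (12/5)*(1/(a (m+1):ℝ))^2 := by
    intro m
    have h1 := hTrec (m+1)
    have h2 := hT95 (m+1)
    have h3 := hstep (m+1)
    nlinarith
  have hT244 : ∀ m, T (m+1) ≤ 1/(a (m+1):ℝ) + (244/135)*(1/(a (m+1):ℝ))^2 := by
    intro m
    have h1 := hstep (m+1)
    have h2 := hT125 (m+1)
    have hrec := hTrec (m+1)
    have h3a : (1/(a (m+2):ℝ))^2 ≤ (16/9)*((1/(a (m+1):ℝ))^2)^2 := by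
      nlinarith [h1, (hfpos (m+2)).le]
    have h3b : (1/(a (m+1):ℝ))^2 ≤ 1/9 := by
      nlinarith [hf13 m, hfpos (m+1)]
    have h3 : (1/(a (m+2):ℝ))^2 ≤ (16/81)*(1/(a (m+1):ℝ))^2 := by
      nlinarith [sq_nonneg (1/(a (m+1):ℝ))]
    nlinarith
  have hTnext : ∀ n, 1/(a n:ℝ) ≤ 1/3 → T (n+1) ≤ (17/10)*(1/(a n:ℝ))^2 := by
    intro n hn
    have h1 := hstep n
    have h2 := hT244 n
    have h3a : (1/(a (n+1):ℝ))^2 ≤ (16/9)*((1/(a n:ℝ))^2)^2 := by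
      nlinarith [h1, (hfpos (n+1)).le]
    have h3b : (1/(a n:ℝ))^2 ≤ 1/9 := by nlinarith [hfpos n]
    have h3 : (1/(a (n+1):ℝ))^2 ≤ (16/81)*(1/(a n:ℝ))^2 := by
      nlinarith [sq_nonneg (1/(a n:ℝ))]
    nlinarith
  -- the pinning step
  have astep : ∀ n (m : ℕ), 1 ≤ m → T n = 1/(m:ℝ) → a n = m + 1 := by
    intro n m hm hT
    have hmR : (1:ℝ) ≤ (m:ℝ) := by exact_mod_cast hm
    have hmpos : (0:ℝ) < (m:ℝ) := by linarith
    have hlt : (m:ℝ) < (a n:ℝ) := by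
      have h1 : 1/(a n:ℝ) < 1/(m:ℝ) := by rw [← hT]; exact hflt n
      rw [div_lt_div_iff₀ (hApos n) hmpos] at h1
      linarith
    have hltn : m < a n := by exact_mod_cast hlt
    by_contra hne
    have hge : m + 2 ≤ a n := by omega
    have hgeR : (m:ℝ) + 2 ≤ (a n:ℝ) := by exact_mod_cast hge
    have hA3 : (3:ℝ) ≤ (a n:ℝ) := by linarith
    have hf3 : 1/(a n:ℝ) ≤ 1/3 := by
      rw [div_le_div_iff₀ (hApos n) (by norm_num : (0:ℝ) < 3)]
      linarith
    have hup : 1/(m:ℝ) ≤ 1/(a n:ℝ) + (17/10)*(1/(a n:ℝ))^2 := by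
      rw [← hT, hTrec n]
      linarith [hTnext n hf3]
    have e : 1/(a n:ℝ) + (17/10)*(1/(a n:ℝ))^2 = (10*(a n:ℝ) + 17)/(10*(a n:ℝ)^2) := by
      field_simp
    rw [e, div_le_div_iff₀ hmpos (by nlinarith [hApos n])] at hup
    nlinarith [hup, hgeR, hmR, mul_nonneg (by linarith : (0:ℝ) ≤ (a n:ℝ)) (by linarith : (0:ℝ) ≤ (a n:ℝ) - (m:ℝ) - 2)]
  have hs2 : ∀ n, 2 ≤ s n := by
    intro n
    induction n with
    | zero => exact hs0.ge
    | succ n ih =>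
      rw [hsrec n, pow_two]
      have h2 : s n * 2 ≤ s n * s n := Nat.mul_le_mul_left _ ih
      omega
  have hsub : ∀ n, ((s (n+1) : ℝ)) = (s n:ℝ)^2 - (s n:ℝ) + 1 := by
    intro n
    rw [hsrec n]
    have hle : s n ≤ (s n)^2 := by
      have := hs2 n; nlinarith
    push_cast [Nat.cast_sub hle]
    ring
  have key : ∀ n, T n = 1/((s n : ℝ) - 1) := by
    intro n
    induction n with
    | zero => rw [hT0, hs0]; norm_num
    | succ n ih =>
      have h2n : 2 ≤ s n := hs2 n
      have hsn2 : (2:ℝ) ≤ (s n:ℝ) := by exact_mod_cast hs2 n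
      have han : a n = s n := by
        have h := astep n (s n - 1) (by omega) (by
          rw [ih]
          congr 1
          have : ((s n - 1 : ℕ) : ℝ) = (s n:ℝ) - 1 := by
            push_cast [Nat.cast_sub (by omega : 1 ≤ s n)]; ring
          rw [this])
        omega
      have hrec := hTrec n
      rw [ih, han] at hrec
      have h1 : T (n+1) = 1/((s n:ℝ) - 1) - 1/(s n:ℝ) := by linarith
      rw [h1, hsub n]
      have h2 : (s n:ℝ) - 1 ≠ 0 := by linarith
      have h3 : (s n:ℝ) ≠ 0 := by linarith
      have h4 : (s n:ℝ)^2 - (s n:ℝ) + 1 - 1 = (s n:ℝ) * ((s n:ℝ) - 1) := by ring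
      rw [h4]
      field_simp
      ring
  intro n
  have hsn2 : 2 ≤ s n := hs2 n
  have h := astep n (s n - 1) (by omega) (by
    rw [key n]
    congr 1
    have : ((s n - 1 : ℕ) : ℝ) = (s n:ℝ) - 1 := by
      push_cast [Nat.cast_sub (by omega : 1 ≤ s n)]; ring
    rw [this])
  omega
end

section
/- If (a_n) is a sequence of positive integers satisfying a_n²/a_{n+1} ≤ 2/3 for all n and ∑_{n=1}^∞ 1/a_n = (5 − √5)/2, then a_n = F_{2^n} for all n, where F is the Fibonacci sequence with F_1 = F_2 = 1. -/
open Filter Finset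

noncomputable section MillinAux

private def mq : ℝ := (3 - Real.sqrt 5) / 2

private lemma s5 : Real.sqrt 5 ^ 2 = 5 := Real.sq_sqrt (by norm_num)

private lemma s5l : 2 < Real.sqrt 5 := by
  nlinarith [s5, Real.sqrt_nonneg 5]

private lemma s5u : Real.sqrt 5 < 3 := by
  nlinarith [s5, Real.sqrt_nonneg 5]

private lemma mq_pos : 0 < mq := by unfold mq; linarith [s5u]

private lemma mq_lt_one : mq < 1 := by unfold mq; linarith [s5l]

private lemma goldConj_sq_eq : Real.goldenConj ^ 2 = mq := by
  unfold mq
  have h := s5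
  unfold Real.goldenConj
  nlinarith [h]

private lemma fib_cast (j : ℕ) :
    (Nat.fib (2 * j) : ℝ) * (Real.sqrt 5 * mq ^ j) = 1 - mq ^ (2 * j) := by
  have hψ : Real.goldenConj ^ (2 * j) = mq ^ j := by rw [pow_mul, goldConj_sq_eq]
  have hφ : Real.goldenRatio ^ (2 * j) * mq ^ j = 1 := by
    rw [pow_mul, ← goldConj_sq_eq, ← mul_pow, ← mul_pow, Real.goldenRatio_mul_goldenConj, neg_one_sq, one_pow]
  have hs : Real.sqrt 5 ≠ 0 := by positivity
  rw [Real.coe_fib_eq]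
  have key : (Real.goldenRatio ^ (2 * j) - Real.goldenConj ^ (2 * j)) / Real.sqrt 5 *
      (Real.sqrt 5 * mq ^ j)
      = Real.goldenRatio ^ (2 * j) * mq ^ j - Real.goldenConj ^ (2 * j) * mq ^ j := by
    field_simp
  rw [key, hφ, hψ, ← pow_add]
  rw [two_mul]

end MillinAux

theorem millin_characterization
    (a : ℕ → ℕ) (hpos : ∀ n, 0 < a n)
    (hratio : ∀ n, (a n : ℝ) ^ 2 / (a (n + 1) : ℝ) ≤ 2 / 3)
    (hsum : ∑' n, 1 / (a n : ℝ) = (5 - Real.sqrt 5) / 2) :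
    ∀ n, a n = Nat.fib (2 ^ (n + 1)) := by
  have hs2 : Real.sqrt 5 ^ 2 = 5 := s5
  have hsl : 2 < Real.sqrt 5 := s5l
  have hsu : Real.sqrt 5 < 3 := s5u
  set f : ℕ → ℝ := fun n => 1 / (a n : ℝ) with hfdef
  have hcpos : ∀ n, (0 : ℝ) < (a n : ℝ) := fun n => by exact_mod_cast hpos n
  have hf' : ∀ n, f n = 1 / (a n : ℝ) := fun n => rfl
  have hfpos : ∀ n, 0 < f n := fun n => by
    rw [hf']; exact div_pos one_pos (hcpos n)
  -- summability
  have hSf : Summable f := by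
    by_contra h
    rw [tsum_eq_zero_of_not_summable h] at hsum
    nlinarith [hsum, hsu]
  have hshift : ∀ n, Summable fun k => f (n + k) := by
    intro n
    have := (summable_nat_add_iff (f := f) n).2 hSf
    exact this.congr fun k => by rw [add_comm]
  -- growth
  have key : ∀ n, 3 * (a n : ℝ) ^ 2 ≤ 2 * (a (n + 1) : ℝ) := by
    intro n
    have h := hratio n
    rw [div_le_iff₀ (hcpos (n + 1))] at h
    linarith
  have keyN : ∀ n, 3 * a n ^ 2 ≤ 2 * a (n + 1) := fun n => by
    have := key n; exact_mod_cast this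
  have mono : ∀ n k, a n ≤ a (n + k) := by
    intro n k
    induction k with
    | zero => rfl
    | succ k ih =>
      have h1 := keyN (n + k)
      have h2 : a (n + k) ≤ a (n + k) ^ 2 := Nat.le_self_pow (by norm_num) _
      have : a (n + k) ≤ a (n + k + 1) := by nlinarith
      exact le_trans ih this
  -- geometric bound
  have geo : ∀ n k, f (n + k) ≤ f n * (2 / (3 * (a n : ℝ))) ^ k := by
    intro n k
    induction k with
    | zero => simp
    | succ k ih =>
      have hA : (0 : ℝ) < (a (n + k) : ℝ) := hcpos _
      have hB : (0 : ℝ) < (a (n + k + 1) : ℝ) := hcpos _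
      have h1 : f (n + k + 1) ≤ 2 / (3 * (a (n + k) : ℝ)) * f (n + k) := by
        have hk := key (n + k)
        rw [hf', hf', div_mul_div_comm, div_le_div_iff₀ hB (by positivity)]
        nlinarith
      have h2 : 2 / (3 * (a (n + k) : ℝ)) ≤ 2 / (3 * (a n : ℝ)) := by
        have hcast : (a n : ℝ) ≤ (a (n + k) : ℝ) := by exact_mod_cast mono n k
        have hp1 : (0 : ℝ) < 3 * (a (n + k) : ℝ) := by linarith
        have hp2 : (0 : ℝ) < 3 * (a n : ℝ) := by linarith [hcpos n]
        rw [div_le_div_iff₀ hp1 hp2]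
        nlinarith
      have h3 : f (n + (k + 1)) ≤ 2 / (3 * (a n : ℝ)) * (f n * (2 / (3 * (a n : ℝ))) ^ k) := by
        have hmm := mul_le_mul h2 ih (le_of_lt (hfpos _)) (by positivity)
        calc f (n + (k + 1)) = f (n + k + 1) := rfl
          _ ≤ 2 / (3 * (a (n + k) : ℝ)) * f (n + k) := h1
          _ ≤ _ := hmm
      calc f (n + (k + 1)) ≤ 2 / (3 * (a n : ℝ)) * (f n * (2 / (3 * (a n : ℝ))) ^ k) := h3
        _ = f n * (2 / (3 * (a n : ℝ))) ^ (k + 1) := by ring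
  -- tail upper bound
  have tail_ub : ∀ n, ∑' k, f (n + k) ≤ 3 / (3 * (a n : ℝ) - 2) := by
    intro n
    have han : (1 : ℝ) ≤ (a n : ℝ) := by exact_mod_cast hpos n
    set r : ℝ := 2 / (3 * (a n : ℝ)) with hrdef
    have hr0 : 0 ≤ r := by rw [hrdef]; positivity
    have hr1 : r < 1 := by
      rw [hrdef, div_lt_one (by linarith)]
      linarith
    have hgs : Summable fun k => f n * r ^ k :=
      (summable_geometric_of_lt_one hr0 hr1).mul_left _
    have h := Summable.tsum_le_tsum (geo n) (hshift n) hgs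
    rw [tsum_mul_left, tsum_geometric_of_lt_one hr0 hr1] at h
    have heq : f n * (1 - r)⁻¹ = 3 / (3 * (a n : ℝ) - 2) := by
      rw [hf', hrdef]
      have h1 : (a n : ℝ) ≠ 0 := ne_of_gt (hcpos n)
      have h2 : 3 * (a n : ℝ) - 2 ≠ 0 := by intro h'; nlinarith
      have h3 : 1 - 2 / (3 * (a n : ℝ)) = (3 * (a n : ℝ) - 2) / (3 * (a n : ℝ)) := by
        field_simp
      rw [h3, inv_div]
      field_simp
    rw [heq] at h
    exact h
  -- splitting
  have hsplit : ∀ n, ∑' k, f (n + k) = f n + ∑' k, f (n + 1 + k) := by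
    intro n
    have h := Summable.tsum_eq_zero_add (hshift n)
    simp only [add_zero] at h
    rw [h]
    congr 1
    exact tsum_congr fun k => by rw [show n + (k + 1) = n + 1 + k by omega]
  -- tail strict lower bound
  have tail_lb : ∀ n, f n < ∑' k, f (n + k) := by
    intro n
    rw [hsplit n]
    have h : 0 < ∑' k, f (n + 1 + k) :=
      Summable.tsum_pos (hshift (n + 1)) (fun i => le_of_lt (hfpos _)) 0 (hfpos _)
    linarith
  -- the main step
  have step : ∀ n (F : ℕ) (v : ℝ), 0 < v → v < 1 →
      (F : ℝ) * (Real.sqrt 5 * v) = 1 - v ^ 2 →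
      (∑' k, f (n + k)) = Real.sqrt 5 * v / (1 - v) →
      a n = F ∧ (∑' k, f (n + 1 + k)) = Real.sqrt 5 * v ^ 2 / (1 - v ^ 2) := by
    intro n F v hv0 hv1 hFc hT
    have h1v : (0 : ℝ) < 1 - v := by linarith
    have h1v2 : (0 : ℝ) < 1 - v ^ 2 := by nlinarith
    have hsv : (0 : ℝ) < Real.sqrt 5 * v := by nlinarith
    have hFr : (F : ℝ) = (1 - v ^ 2) / (Real.sqrt 5 * v) := by
      rw [eq_div_iff (ne_of_gt hsv)]; exact hFc
    have hFsplit : (1 - v ^ 2) / (Real.sqrt 5 * v)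
        = (1 - v) / (Real.sqrt 5 * v) + (1 - v) / Real.sqrt 5 := by
      field_simp
      ring
    -- lower bound : F ≤ a n
    have hlow := tail_lb n
    rw [hT, hf'] at hlow
    rw [div_lt_div_iff₀ (hcpos n) h1v] at hlow
    have hx : (1 - v) / (Real.sqrt 5 * v) < (a n : ℝ) := by
      rw [div_lt_iff₀ hsv]
      nlinarith
    have hsmall : (1 - v) / Real.sqrt 5 < 1 := by
      rw [div_lt_one (by linarith)]
      linarith
    have hFlt : (F : ℝ) < (a n : ℝ) + 1 := by
      rw [hFr, hFsplit]
      linarith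
    have hle : F ≤ a n := by
      have : F < a n + 1 := by exact_mod_cast hFlt
      omega
    -- upper bound : a n ≤ F
    have hge : a n ≤ F := by
      by_contra hc
      push_neg at hc
      have hA : (F : ℝ) + 1 ≤ (a n : ℝ) := by
        have : F + 1 ≤ a n := by omega
        exact_mod_cast this
      have h2 := tail_ub n
      rw [hT] at h2
      have han1 : (1 : ℝ) ≤ (a n : ℝ) := by exact_mod_cast hpos n
      have h3a : (0 : ℝ) < 3 * (a n : ℝ) - 2 := by linarith
      rw [div_le_div_iff₀ h1v h3a] at h2
      nlinarith [mul_le_mul_of_nonneg_left hA (le_of_lt hsv), hFc,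
        mul_pos hv0 h1v]
    have haF : a n = F := le_antisymm hge hle
    refine ⟨haF, ?_⟩
    have hFpos : (0 : ℝ) < (F : ℝ) := by
      rw [hFr]; exact div_pos h1v2 hsv
    have hsp := hsplit n
    rw [hT] at hsp
    have hfn : f n = 1 / (F : ℝ) := by
      have h := hf' n
      rw [haF] at h
      exact h
    rw [hfn] at hsp
    have hteq : ∑' k, f (n + 1 + k) = Real.sqrt 5 * v / (1 - v) - 1 / (F : ℝ) := by
      linarith
    rw [hteq, hFr, one_div_div]
    have e1 : (1 : ℝ) - v ≠ 0 := ne_of_gt h1v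
    have e2 : (1 : ℝ) - v ^ 2 ≠ 0 := ne_of_gt h1v2
    have e3 : Real.sqrt 5 ≠ 0 := by positivity
    have e4 : v ≠ 0 := ne_of_gt hv0
    field_simp
    ring
  -- base case data
  have base_fc : ((Nat.fib 2 : ℕ) : ℝ) * (Real.sqrt 5 * mq) = 1 - mq ^ 2 := by
    have h := fib_cast 1
    norm_num at h
    rw [Nat.fib_two, Nat.cast_one, one_mul]
    exact h
  have base_T : ∑' k, f (0 + k) = Real.sqrt 5 * mq / (1 - mq) := by
    have h0 : ∑' k, f (0 + k) = ∑' k, f k := tsum_congr fun k => by rw [Nat.zero_add]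
    rw [h0]
    show tsum f = _
    rw [hsum]
    have h1 : (1 : ℝ) - mq ≠ 0 := ne_of_gt (by linarith [mq_lt_one])
    rw [eq_div_iff h1]
    unfold mq
    linear_combination (1 / 4 : ℝ) * s5
  -- the induction
  have main : ∀ n, a n = Nat.fib (2 ^ (n + 1)) ∧
      (∑' k, f (n + 1 + k))
        = Real.sqrt 5 * mq ^ 2 ^ (n + 1) / (1 - mq ^ 2 ^ (n + 1)) := by
    intro n
    induction n with
    | zero =>
      have h := step 0 (Nat.fib 2) mq mq_pos mq_lt_one base_fc base_T
      refine ⟨h.1, ?_⟩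
      have h2 := h.2
      rw [show (2 : ℕ) ^ (0 + 1) = 2 from rfl]
      exact h2
    | succ n ih =>
      have hexp : (2 : ℕ) ^ (n + 1) ≠ 0 := by positivity
      have hw0 : 0 < mq ^ 2 ^ (n + 1) := pow_pos mq_pos _
      have hw1 : mq ^ 2 ^ (n + 1) < 1 := pow_lt_one₀ (le_of_lt mq_pos) mq_lt_one hexp
      have hfc := fib_cast (2 ^ (n + 1))
      have e1 : 2 * 2 ^ (n + 1) = 2 ^ (n + 2) := by ring
      have e2 : mq ^ (2 * 2 ^ (n + 1)) = (mq ^ 2 ^ (n + 1)) ^ 2 := pow_mul' mq 2 _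
      rw [e2, e1] at hfc
      have h := step (n + 1) (Nat.fib (2 ^ (n + 2))) (mq ^ 2 ^ (n + 1)) hw0 hw1 hfc ih.2
      refine ⟨h.1, ?_⟩
      have h2 := h.2
      rw [← e2, e1] at h2
      exact h2
  exact fun n => (main n).1
end

section
/- The Millin series identity: ∑_{n=1}^∞ 1/F_{2^n} = (5 − √5)/2, where F is the Fibonacci sequence. -/
open Real Filter Nat

lemma cassini_aux (n : ℕ) : (fib (n+2) : ℤ) * fib n - (fib (n+1))^2 = (-1)^(n+1) := by
  induction n with
  | zero => simp
  | succ k ih =>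
    have h : fib (k+3) = fib (k+1) + fib (k+2) := by
      have := Nat.fib_add_two (n := k+1)
      rw [show k+1+2 = k+3 from rfl, show k+1+1 = k+2 from rfl] at this
      exact this
    have h' : (fib (k+3) : ℤ) = fib (k+1) + fib (k+2) := by exact_mod_cast h
    have h2' : (fib (k+2) : ℤ) = fib k + fib (k+1) := by exact_mod_cast (Nat.fib_add_two (n := k))
    rw [show k+1+2 = k+3 from rfl, show k+1+1 = k+2 from rfl, h']
    have hs : (-1:ℤ)^(k+2) = -(-1)^(k+1) := by rw [pow_succ]; ring
    rw [show k+1+1 = k+2 from rfl, hs]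
    linear_combination (-1 : ℤ) * ih - (fib (k+2) : ℤ) * h2'

lemma step_key_aux (k : ℕ) :
    (fib (4*k+4) : ℤ) * fib (2*k+1) - fib (2*k+2) * fib (4*k+3) = fib (2*k+2) := by
  have h1 : fib (4*k+4) = fib (2*k+1) * fib (2*k+2) + fib (2*k+2) * fib (2*k+3) := by
    have := Nat.fib_add (2*k+1) (2*k+2)
    rw [show 2*k+1 + (2*k+2) + 1 = 4*k+4 by ring, show 2*k+1+1 = 2*k+2 from rfl,
      show 2*k+2+1 = 2*k+3 from rfl] at this
    exact this
  have h2 : fib (4*k+3) = fib (2*k+2)^2 + fib (2*k+1)^2 := by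
    have := Nat.fib_two_mul_add_one (2*k+1)
    rw [show 2*(2*k+1)+1 = 4*k+3 by ring, show 2*k+1+1 = 2*k+2 from rfl] at this
    exact this
  have h3 := cassini_aux (2*k+1)
  rw [show (2*k+1)+2 = 2*k+3 from rfl, show (2*k+1)+1 = 2*k+2 from rfl] at h3
  have e1 : (fib (4*k+4) : ℤ) = fib (2*k+1) * fib (2*k+2) + fib (2*k+2) * fib (2*k+3) := by
    exact_mod_cast h1
  have e2 : (fib (4*k+3) : ℤ) = fib (2*k+2)^2 + fib (2*k+1)^2 := by exact_mod_cast h2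
  have h4 : (-1 : ℤ)^(2*k+1+1) = 1 := by
    rw [show 2*k+1+1 = 2*(k+1) by ring, pow_mul]; norm_num
  rw [h4] at h3
  rw [e1, e2]
  linear_combination (fib (2*k+2) : ℤ) * h3

lemma millin_partial_sum (N : ℕ) :
    ∑ i ∈ Finset.range (N+1), 1 / (fib (2 ^ (i + 1)) : ℝ)
      = 2 - (fib (2^(N+1) - 1) : ℝ) / fib (2^(N+1)) := by
  induction N with
  | zero => norm_num
  | succ M ih =>
    rw [Finset.sum_range_succ, ih]
    obtain ⟨k, hk⟩ : ∃ k, 2^(M+1) = 2*k + 2 := by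
      refine ⟨2^M - 1, ?_⟩
      have : 1 ≤ 2^M := Nat.one_le_two_pow
      rw [pow_succ]; omega
    have hk2 : 2^(M+2) = 4*k + 4 := by rw [pow_succ, hk]; ring
    rw [hk, hk2, show 2*k+2-1 = 2*k+1 from rfl, show 4*k+4-1 = 4*k+3 from rfl]
    have p1 : (0:ℝ) < fib (2*k+2) := by exact_mod_cast Nat.fib_pos.2 (by omega)
    have p2 : (0:ℝ) < fib (4*k+4) := by exact_mod_cast Nat.fib_pos.2 (by omega)
    have key : (fib (4*k+4) : ℝ) * fib (2*k+1) - fib (2*k+2) * fib (4*k+3) = fib (2*k+2) := by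
      exact_mod_cast step_key_aux k
    field_simp
    nlinarith [key]

lemma fib_ratio_tendsto :
    Tendsto (fun n : ℕ => (fib n : ℝ) / fib (n+1)) atTop (nhds goldenRatio⁻¹) := by
  have hginv : (0:ℝ) < goldenRatio⁻¹ := inv_pos.2 goldenRatio_pos
  have hginv1 : goldenRatio⁻¹ < 1 := inv_lt_one_of_one_lt₀ one_lt_goldenRatio
  have habs : |goldenConj| = goldenRatio⁻¹ := by
    rw [inv_goldenRatio]; rw [abs_of_neg goldenConj_neg]
  have h0 : Tendsto (fun n : ℕ => (fib n : ℝ) / fib (n+1) - goldenRatio⁻¹) atTop (nhds 0) := by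
    refine squeeze_zero_norm (a := fun n => (goldenRatio⁻¹) ^ n) ?_
      (tendsto_pow_atTop_nhds_zero_of_lt_one hginv.le hginv1)
    intro n
    have hfib : (fib (n+1) : ℝ) - goldenRatio * fib n = goldenConj ^ n := fib_succ_sub_goldenRatio_mul_fib n
    have hp : (0:ℝ) < fib (n+1) := by exact_mod_cast Nat.fib_pos.2 (by omega)
    have h1 : (1:ℝ) ≤ fib (n+1) := by exact_mod_cast Nat.fib_pos.2 (by omega)
    have hgold : (1:ℝ) < goldenRatio := one_lt_goldenRatio
    have key : (fib n : ℝ) / fib (n+1) - goldenRatio⁻¹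
        = -(goldenConj ^ n) / (fib (n+1) * goldenRatio) := by
      rw [inv_eq_one_div, div_sub_div _ _ hp.ne' goldenRatio_ne_zero]
      congr 1
      linarith [hfib]
    rw [key, norm_div, norm_neg, norm_pow]
    have hd : (1:ℝ) ≤ fib (n+1) * goldenRatio := by nlinarith
    have hnn : ‖(fib (n+1) : ℝ) * goldenRatio‖ = (fib (n+1) : ℝ) * goldenRatio := by
      rw [Real.norm_eq_abs, abs_of_pos (by nlinarith)]
    rw [hnn, Real.norm_eq_abs, habs]
    calc (goldenRatio⁻¹)^n / ((fib (n+1) : ℝ) * goldenRatio) ≤ (goldenRatio⁻¹)^n / 1 :=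
          div_le_div_of_nonneg_left (by positivity) one_pos hd
      _ = (goldenRatio⁻¹)^n := by ring
  have := h0.add_const goldenRatio⁻¹
  simpa using this

theorem millin_series :
    ∑' n : ℕ, 1 / (Nat.fib (2 ^ (n + 1)) : ℝ) = (5 - Real.sqrt 5) / 2 := by
  have hnonneg : ∀ i : ℕ, (0:ℝ) ≤ 1 / (fib (2 ^ (i + 1)) : ℝ) := by
    intro i; positivity
  have hfin : HasSum (fun n : ℕ => 1 / (fib (2 ^ (n + 1)) : ℝ)) ((5 - Real.sqrt 5) / 2) := by
    rw [hasSum_iff_tendsto_nat_of_nonneg hnonneg]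
    rw [← Filter.tendsto_add_atTop_iff_nat 1]
    have heq : (fun N : ℕ => ∑ i ∈ Finset.range (N+1), 1 / (fib (2 ^ (i + 1)) : ℝ))
        = fun N => 2 - (fib (2^(N+1) - 1) : ℝ) / fib (2^(N+1)) := by
      funext N; exact millin_partial_sum N
    rw [heq]
    have hm : Tendsto (fun N : ℕ => 2^(N+1) - 1) atTop atTop := by
      apply tendsto_atTop_mono (f := fun N : ℕ => N)
      · intro N
        have := Nat.lt_two_pow_self (n := N)
        have h2 : 2^N ≤ 2^(N+1) := Nat.pow_le_pow_right (by norm_num) (by omega)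
        omega
      · exact tendsto_id
    have hcomp : Tendsto (fun N : ℕ => (fib (2^(N+1) - 1) : ℝ) / fib (2^(N+1)))
        atTop (nhds goldenRatio⁻¹) := by
      have := fib_ratio_tendsto.comp hm
      refine this.congr fun N => ?_
      have hidx : 2^(N+1) - 1 + 1 = 2^(N+1) := by
        have : 1 ≤ 2^(N+1) := Nat.one_le_two_pow
        omega
      simp only [Function.comp, hidx]
    have := (tendsto_const_nhds (x := (2:ℝ)) (f := atTop (α := ℕ))).sub hcomp
    convert this using 2
    rw [inv_goldenRatio, goldenConj]
    ring
  exact hfin.tsum_eq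
end

section
/- The set of α ∈ (1, ∞) such that ⌊α^{2^n}⌋ is not a Type 2 irrationality sequence is countable. Here an increasing sequence of positive integers (a_n) is a Type 2 irrationality sequence if for every sequence of positive integers (b_n) with b_n/a_n → 1, the sum ∑ 1/b_n is irrational. -/
open Filter Finset

/-- A nondecreasing sequence of positive integers `a` is a Type 2 irrationality
sequence if for every sequence of positive integers `b` with `b n / a n → 1`,
the reciprocal sum of `b` is irrational. -/
def IsType2IrrationalitySequence (a : ℕ → ℕ) : Prop :=
  Monotone a ∧ (∀ n, 0 < a n) ∧
    ∀ b : ℕ → ℕ, (∀ n, 0 < b n) →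
      Tendsto (fun n => (b n : ℝ) / (a n : ℝ)) atTop (nhds 1) →
      Irrational (∑' n, 1 / (b n : ℝ))

/-- Auxiliary data recorded for each "bad" `α`: there exist sequences `b`, `Q`, `A`
satisfying a rigid recursion from index `N` on, with `Q N = Q0`, `A N = A0`,
and `b n / α ^ (2 ^ (n+1)) → 1`.  The point is that this data determines `α`. -/
def T2BadData (α : ℝ) (N : ℕ) (Q0 A0 : ℤ) : Prop :=
  ∃ b : ℕ → ℕ, ∃ Q A : ℕ → ℤ,
    Q N = Q0 ∧ A N = A0 ∧
    (∀ n, N ≤ n →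
      A (n+1) = (b n : ℤ) * A n - Q n ∧
      Q (n+1) = (b n : ℤ) * Q n ∧
      1 ≤ A n ∧ A n < 2 * A (n+1) ∧ 2 * A (n+1) < 3 * A n) ∧
    Tendsto (fun n => (b n : ℝ) / α ^ 2 ^ (n+1)) atTop (nhds 1)

/-- The recursion in `T2BadData` is deterministic: the integer `A (n+1)` lies in a
half-open interval of length `A n` and in a fixed residue class modulo `A n`,
hence is unique, and then `b n`, `Q (n+1)` are determined. -/
lemma t2_uniq_seq {N : ℕ} {b b' : ℕ → ℕ} {Q A Q' A' : ℕ → ℤ}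
    (h : ∀ n, N ≤ n →
      A (n+1) = (b n : ℤ) * A n - Q n ∧ Q (n+1) = (b n : ℤ) * Q n ∧
      1 ≤ A n ∧ A n < 2 * A (n+1) ∧ 2 * A (n+1) < 3 * A n)
    (h' : ∀ n, N ≤ n →
      A' (n+1) = (b' n : ℤ) * A' n - Q' n ∧ Q' (n+1) = (b' n : ℤ) * Q' n ∧
      1 ≤ A' n ∧ A' n < 2 * A' (n+1) ∧ 2 * A' (n+1) < 3 * A' n)
    (hQ : Q N = Q' N) (hA : A N = A' N) :
    ∀ n, N ≤ n → b n = b' n := by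
  have key : ∀ n, N ≤ n → Q n = Q' n ∧ A n = A' n := by
    intro n hn
    induction n, hn using Nat.le_induction with
    | base => exact ⟨hQ, hA⟩
    | succ n hn ih =>
      obtain ⟨hQn, hAn⟩ := ih
      obtain ⟨e1, e2, e3, e4, e5⟩ := h n hn
      obtain ⟨f1, f2, f3, f4, f5⟩ := h' n hn
      simp only [← hQn, ← hAn] at f1 f2 f3 f4 f5
      have hd : A (n+1) - A' (n+1) = ((b n : ℤ) - (b' n : ℤ)) * A n := by
        rw [e1, f1]; ring
      have hApos : (0:ℤ) < A n := by linarith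
      have hu : ((b n : ℤ) - (b' n : ℤ)) * A n < A n := by linarith
      have hl : -(A n) < ((b n : ℤ) - (b' n : ℤ)) * A n := by linarith
      have hb : (b n : ℤ) = (b' n : ℤ) := by
        by_contra hne
        rcases lt_or_gt_of_ne hne with hlt' | hlt'
        · nlinarith [mul_nonneg (by linarith : (0:ℤ) ≤ -((b n : ℤ) - (b' n : ℤ)) - 1)
            (by linarith : (0:ℤ) ≤ A n)]
        · nlinarith [mul_nonneg (by linarith : (0:ℤ) ≤ ((b n : ℤ) - (b' n : ℤ)) - 1)
            (by linarith : (0:ℤ) ≤ A n)]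
      constructor
      · rw [e2, f2, hb]
      · rw [e1, f1, hb]
  intro n hn
  obtain ⟨hQn, hAn⟩ := key n hn
  obtain ⟨hQs, hAs⟩ := key (n+1) (le_trans hn (Nat.le_succ n))
  obtain ⟨e1, _, e3, _, _⟩ := h n hn
  obtain ⟨f1, _, _, _, _⟩ := h' n hn
  rw [← hQn, ← hAn] at f1
  have : ((b n : ℤ) - (b' n : ℤ)) * A n = 0 := by
    have := e1.symm.trans (hAs.trans f1)
    nlinarith [this]
  have hb : (b n : ℤ) = (b' n : ℤ) := by
    rcases mul_eq_zero.1 this with h0 | h0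
    · linarith
    · exfalso; linarith
  exact_mod_cast hb

/-- If the same sequence of numerators is asymptotic to both `α ^ 2 ^ (n+1)` and
`α' ^ 2 ^ (n+1)` with `1 < α < α'`, we get a contradiction. -/
lemma t2_ratio_contra {α α' : ℝ} (hα : 1 < α) (hlt : α < α') {c : ℕ → ℝ}
    (h1 : Tendsto (fun n => c n / α ^ 2 ^ (n+1)) atTop (nhds 1))
    (h2 : Tendsto (fun n => c n / α' ^ 2 ^ (n+1)) atTop (nhds 1)) : False := by
  have hα0 : (0:ℝ) < α := lt_trans one_pos hα
  have hα'0 : (0:ℝ) < α' := lt_trans hα0 hlt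
  have hcpos : ∀ᶠ n in atTop, 0 < c n := by
    filter_upwards [h1.eventually_const_lt (by norm_num : (1:ℝ)/2 < 1)] with n hn
    have hx : (0:ℝ) < α ^ 2 ^ (n+1) := pow_pos hα0 _
    have hpos : 0 < c n / α ^ 2 ^ (n+1) := lt_trans (by norm_num) hn
    rcases div_pos_iff.1 hpos with ⟨h, _⟩ | ⟨_, h⟩
    · exact h
    · linarith
  have hdiv : Tendsto (fun n => (c n / α ^ 2 ^ (n+1)) / (c n / α' ^ 2 ^ (n+1)))
      atTop (nhds 1) := by
    have h := h1.div h2 one_ne_zero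
    rw [div_one] at h
    exact h
  have heq : ∀ᶠ n in atTop,
      (c n / α ^ 2 ^ (n+1)) / (c n / α' ^ 2 ^ (n+1)) = (α'/α) ^ 2 ^ (n+1) := by
    filter_upwards [hcpos] with n hn
    have hx : (α:ℝ) ^ 2 ^ (n+1) ≠ 0 := (pow_pos hα0 _).ne'
    have hx' : (α':ℝ) ^ 2 ^ (n+1) ≠ 0 := (pow_pos hα'0 _).ne'
    rw [div_pow]
    field_simp
  have htop : Tendsto (fun n : ℕ => (α'/α) ^ 2 ^ (n+1)) atTop atTop := by
    have h1' : Tendsto (fun k : ℕ => (α'/α) ^ k) atTop atTop :=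
      tendsto_pow_atTop_atTop_of_one_lt ((one_lt_div hα0).2 hlt)
    exact h1'.comp ((tendsto_pow_atTop_atTop_of_one_lt Nat.one_lt_two).comp
      (tendsto_add_atTop_nat 1))
  have hone : Tendsto (fun n : ℕ => (α'/α) ^ 2 ^ (n+1)) atTop (nhds 1) :=
    hdiv.congr' heq
  have hev1 : ∀ᶠ n : ℕ in atTop, (α'/α) ^ 2 ^ (n+1) < 2 :=
    hone.eventually_lt_const (by norm_num)
  have hev2 : ∀ᶠ n : ℕ in atTop, (2:ℝ) < (α'/α) ^ 2 ^ (n+1) :=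
    htop.eventually_gt_atTop 2
  obtain ⟨n, hn1, hn2⟩ := (hev1.and hev2).exists
  linarith

/-- The set of `α` with given bad data is a subsingleton. -/
lemma t2_badData_subsingleton (N : ℕ) (Q0 A0 : ℤ) :
    Set.Subsingleton {α : ℝ | 1 < α ∧ T2BadData α N Q0 A0} := by
  rintro α ⟨hα, b, Q, A, hQN, hAN, hrec, htend⟩ α' ⟨hα', b', Q', A', hQN', hAN', hrec', htend'⟩
  have hbb : ∀ n, N ≤ n → b n = b' n :=
    t2_uniq_seq hrec hrec' (hQN.trans hQN'.symm) (hAN.trans hAN'.symm)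
  have htend2 : Tendsto (fun n => (b n : ℝ) / α' ^ 2 ^ (n+1)) atTop (nhds 1) := by
    refine htend'.congr' ?_
    filter_upwards [eventually_ge_atTop N] with n hn
    rw [hbb n hn]
  rcases lt_trichotomy α α' with h | h | h
  · exact absurd h (by intro hlt; exact t2_ratio_contra hα hlt htend htend2)
  · exact h
  · exact absurd h (by intro hlt; exact t2_ratio_contra hα' hlt htend2 htend)

private lemma t2_lemma_ratio {α : ℝ} (hα : 1 < α) (b : ℕ → ℕ) (hbpos : ∀ n, 0 < b n)
    (hbtend : Tendsto (fun n => (b n : ℝ) / (((⌊α ^ (2 ^ (n + 1))⌋).toNat : ℕ) : ℝ))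
      atTop (nhds 1)) :
    Tendsto (fun n => (b n : ℝ) / α ^ 2 ^ (n+1)) atTop (nhds 1) := by
  have hα0 : (0:ℝ) < α := lt_trans one_pos hα
  have hx1 : ∀ n : ℕ, (1:ℝ) < α ^ 2 ^ (n+1) := fun n => one_lt_pow₀ hα (by positivity)
  have hxpos : ∀ n : ℕ, (0:ℝ) < α ^ 2 ^ (n+1) := fun n => lt_trans one_pos (hx1 n)
  have hfloor_pos : ∀ n : ℕ, 0 < ⌊α ^ 2 ^ (n+1)⌋ := by
    intro n
    have : (1:ℤ) ≤ ⌊α ^ 2 ^ (n+1)⌋ := Int.le_floor.2 (by exact_mod_cast (hx1 n).le)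
    omega
  have hacast : ∀ n : ℕ, (((⌊α ^ (2 ^ (n + 1))⌋).toNat : ℕ) : ℝ) = ((⌊α ^ 2 ^ (n+1)⌋ : ℤ) : ℝ) := by
    intro n
    rw [← Int.cast_natCast, Int.toNat_of_nonneg (hfloor_pos n).le]
  have hxtop : Tendsto (fun n : ℕ => α ^ 2 ^ (n+1)) atTop atTop :=
    (tendsto_pow_atTop_atTop_of_one_lt hα).comp
      ((tendsto_pow_atTop_atTop_of_one_lt Nat.one_lt_two).comp (tendsto_add_atTop_nat 1))
  -- a n / x n → 1
  have haxtend : Tendsto (fun n : ℕ => (((⌊α ^ (2 ^ (n + 1))⌋).toNat : ℕ) : ℝ) / α ^ 2 ^ (n+1))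
      atTop (nhds 1) := by
    have hlow : Tendsto (fun n : ℕ => 1 - 1 / α ^ 2 ^ (n+1)) atTop (nhds 1) := by
      have h0 : Tendsto (fun n : ℕ => 1 / α ^ 2 ^ (n+1)) atTop (nhds 0) :=
        Tendsto.div_atTop tendsto_const_nhds hxtop
      have := (tendsto_const_nhds (x := (1:ℝ))).sub h0
      simpa using this
    refine tendsto_of_tendsto_of_tendsto_of_le_of_le' hlow tendsto_const_nhds ?_ ?_
    · filter_upwards with n
      rw [hacast n, le_div_iff₀ (hxpos n)]
      have he : (1 - 1 / α ^ 2 ^ (n+1)) * α ^ 2 ^ (n+1) = α ^ 2 ^ (n+1) - 1 := by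
        field_simp
      rw [he]
      linarith [Int.sub_one_lt_floor (α ^ 2 ^ (n+1))]
    · filter_upwards with n
      rw [hacast n, div_le_one (hxpos n)]
      exact Int.floor_le _
  have := hbtend.mul haxtend
  rw [mul_one] at this
  refine this.congr fun n => ?_
  have ha0 : (((⌊α ^ (2 ^ (n + 1))⌋).toNat : ℕ) : ℝ) ≠ 0 := by
    rw [hacast n]
    exact_mod_cast (hfloor_pos n).ne'
  field_simp

private lemma t2_lemma_growth {α : ℝ} (hα : 1 < α) (b : ℕ → ℕ) (hbpos : ∀ n, 0 < b n)
    (hr : Tendsto (fun n => (b n : ℝ) / α ^ 2 ^ (n+1)) atTop (nhds 1)) :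
    (Tendsto (fun n => (b n : ℝ)) atTop atTop) ∧
    Tendsto (fun n => (b (n+1) : ℝ) / (b n : ℝ) ^ 2) atTop (nhds 1) := by
  have hα0 : (0:ℝ) < α := lt_trans one_pos hα
  have hxpos : ∀ n : ℕ, (0:ℝ) < α ^ 2 ^ (n+1) := fun n => pow_pos hα0 _
  have hxtop : Tendsto (fun n : ℕ => α ^ 2 ^ (n+1)) atTop atTop :=
    (tendsto_pow_atTop_atTop_of_one_lt hα).comp
      ((tendsto_pow_atTop_atTop_of_one_lt Nat.one_lt_two).comp (tendsto_add_atTop_nat 1))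
  have hbR : ∀ n, (0:ℝ) < (b n : ℝ) := fun n => by exact_mod_cast hbpos n
  have hbtop : Tendsto (fun n => (b n : ℝ)) atTop atTop := by
    refine tendsto_atTop_mono' atTop ?_ (hxtop.atTop_div_const two_pos)
    filter_upwards [hr.eventually_const_lt (by norm_num : (1:ℝ)/2 < 1)] with n hn
    have hn' := (lt_div_iff₀ (hxpos n)).1 hn
    nlinarith [hxpos n]
  refine ⟨hbtop, ?_⟩
  have hr2 : Tendsto (fun n => ((b n : ℝ) / α ^ 2 ^ (n+1)) ^ 2) atTop (nhds 1) := by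
    simpa using hr.pow 2
  have hrs : Tendsto (fun n => (b (n+1) : ℝ) / α ^ 2 ^ (n+1+1)) atTop (nhds 1) :=
    hr.comp (tendsto_add_atTop_nat 1)
  have hq : Tendsto ((fun n => (b (n+1) : ℝ) / α ^ 2 ^ (n+1+1)) /
      fun n => ((b n : ℝ) / α ^ 2 ^ (n+1)) ^ 2) atTop (nhds 1) := by
    simpa using hrs.div hr2 one_ne_zero
  refine hq.congr fun n => ?_
  have hxsq : α ^ 2 ^ (n+1+1) = (α ^ 2 ^ (n+1)) ^ 2 := by
    rw [pow_succ, pow_mul]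
  simp only [Pi.div_apply]
  rw [hxsq, div_pow]
  have hX : ((α ^ 2 ^ (n+1)) ^ 2 : ℝ) ≠ 0 := pow_ne_zero 2 (hxpos n).ne'
  have hB : ((b n : ℝ)) ^ 2 ≠ 0 := pow_ne_zero 2 (hbR n).ne'
  field_simp

set_option maxHeartbeats 1000000 in
private lemma t2_lemma_rec (b : ℕ → ℕ) (hbpos : ∀ n, 0 < b n)
    (hbtop : Tendsto (fun n => (b n : ℝ)) atTop atTop)
    (hs : Tendsto (fun n => (b (n+1) : ℝ) / (b n : ℝ) ^ 2) atTop (nhds 1))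
    (r : ℚ) (hrS : (r : ℝ) = ∑' n, 1 / (b n : ℝ)) :
    ∃ N₀ : ℕ, ∃ Q A : ℕ → ℤ, ∀ n, N₀ ≤ n →
      A (n+1) = (b n : ℤ) * A n - Q n ∧
      Q (n+1) = (b n : ℤ) * Q n ∧
      1 ≤ A n ∧ A n < 2 * A (n+1) ∧ 2 * A (n+1) < 3 * A n := by
  have hbR : ∀ n, (0:ℝ) < (b n : ℝ) := fun n => by exact_mod_cast hbpos n
  -- eventual bounds
  obtain ⟨N₀, hN₀⟩ : ∃ N₀ : ℕ, ∀ n, N₀ ≤ n → (100:ℝ) ≤ (b n : ℝ) ∧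
      (4:ℝ)/5 * (b n : ℝ)^2 < (b (n+1) : ℝ) ∧ ((b (n+1) : ℝ)) < 5/4 * (b n : ℝ)^2 := by
    have e1 : ∀ᶠ n in atTop, (100:ℝ) ≤ (b n : ℝ) := hbtop.eventually_ge_atTop 100
    have e2 : ∀ᶠ n in atTop, (4:ℝ)/5 < (b (n+1) : ℝ) / (b n : ℝ)^2 :=
      hs.eventually_const_lt (by norm_num)
    have e3 : ∀ᶠ n in atTop, (b (n+1) : ℝ) / (b n : ℝ)^2 < 5/4 :=
      hs.eventually_lt_const (by norm_num)
    obtain ⟨N₀, hN₀⟩ := eventually_atTop.1 ((e1.and e2).and e3)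
    refine ⟨N₀, fun n hn => ?_⟩
    obtain ⟨⟨h1, h2⟩, h3⟩ := hN₀ n hn
    have hb2 : (0:ℝ) < (b n : ℝ)^2 := by positivity
    have h2' := (lt_div_iff₀ hb2).1 h2
    have h3' := (div_lt_iff₀ hb2).1 h3
    exact ⟨h1, by linarith, by linarith⟩
  have hb100 : ∀ n, N₀ ≤ n → (100:ℝ) ≤ (b n : ℝ) := fun n hn => (hN₀ n hn).1
  have hlo : ∀ n, N₀ ≤ n → (4:ℝ)/5 * (b n : ℝ)^2 < (b (n+1) : ℝ) := fun n hn => (hN₀ n hn).2.1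
  have hhi : ∀ n, N₀ ≤ n → ((b (n+1) : ℝ)) < 5/4 * (b n : ℝ)^2 := fun n hn => (hN₀ n hn).2.2
  have hstep : ∀ n, N₀ ≤ n → 2 * (b n : ℝ) ≤ (b (n+1) : ℝ) := by
    intro n hn
    nlinarith [hlo n hn, hb100 n hn, hbR n]
  have hexp : ∀ n, N₀ ≤ n → ∀ k : ℕ, (b n : ℝ) * 2 ^ k ≤ (b (n+k) : ℝ) := by
    intro n hn k
    induction k with
    | zero => simp
    | succ k ih =>
      have h1 : 2 * (b (n+k) : ℝ) ≤ (b (n+k+1) : ℝ) := hstep (n+k) (le_trans hn (Nat.le_add_right n k))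
      have : (n + (k+1)) = (n + k) + 1 := rfl
      rw [this, pow_succ]
      nlinarith [ih]
  -- summability
  have hsum : Summable (fun n => 1 / (b n : ℝ)) := by
    apply summable_of_ratio_norm_eventually_le (r := 1/2) (by norm_num)
    filter_upwards [eventually_ge_atTop N₀] with n hn
    have h1 := hstep n hn
    have h2 := hbR n
    have h3 := hbR (n+1)
    rw [Real.norm_eq_abs, Real.norm_eq_abs, abs_of_pos (by positivity), abs_of_pos (by positivity)]
    have h4 : (1:ℝ)/((b (n+1) : ℝ)) ≤ 1/(2*(b n : ℝ)) :=
      one_div_le_one_div_of_le (by positivity) h1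
    have h5 : (1:ℝ)/(2*(b n : ℝ)) = 1/2 * (1/(b n : ℝ)) := by ring
    rw [h5] at h4
    exact h4
  set fb : ℕ → ℝ := fun n => 1 / (b n : ℝ) with hfb
  have hfb_pos : ∀ n, 0 < fb n := fun n => by
    have := hbR n
    positivity
  have htail : ∀ n : ℕ, Summable (fun i => fb (i + n)) := fun n => (summable_nat_add_iff n).2 hsum
  set T : ℕ → ℝ := fun n => ∑' i, fb (i + n) with hT
  have hT_succ : ∀ n, T n = fb n + T (n+1) := by
    intro n
    have h0 := Summable.sum_add_tsum_nat_add (f := fun i => fb (i + n)) 1 (htail n)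
    have h1 : (∑ i ∈ range 1, fb (i + n)) = fb n := by simp
    have h2 : (∑' i, fb (i + 1 + n)) = T (n+1) := by
      apply tsum_congr
      intro i
      congr 1
      omega
    rw [h1, h2] at h0
    exact h0.symm
  have hT_pos : ∀ n, 0 < T n := by
    intro n
    have h1 : fb (0 + n) ≤ T n :=
      Summable.le_tsum (htail n) 0 (fun i _ => (hfb_pos _).le)
    have := hfb_pos (0 + n)
    linarith
  have hT_gt : ∀ n, fb n < T n := by
    intro n
    rw [hT_succ n]
    linarith [hT_pos (n+1)]
  have hT_ub : ∀ n, N₀ ≤ n → T n ≤ 2 * fb n := by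
    intro n hn
    have hle : ∀ i : ℕ, fb (i + n) ≤ fb n * (1/2)^i := by
      intro i
      have h1 : (b n : ℝ) * 2 ^ i ≤ (b (n+i) : ℝ) := hexp n hn i
      have h2 : (b (i+n) : ℝ) = (b (n+i) : ℝ) := by rw [Nat.add_comm]
      have h3 : (0:ℝ) < (b n : ℝ) * 2 ^ i := by
        have := hbR n
        positivity
      have h4 : (1:ℝ)/(b (i+n) : ℝ) ≤ 1/((b n : ℝ) * 2 ^ i) := by
        apply one_div_le_one_div_of_le h3
        rw [h2]
        exact h1
      have hb0 : (b n : ℝ) ≠ 0 := (hbR n).ne'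
      calc fb (i+n) = 1/(b (i+n) : ℝ) := rfl
        _ ≤ 1/((b n : ℝ) * 2 ^ i) := h4
        _ = fb n * (1/2)^i := by
            simp only [hfb]
            field_simp
            rw [← mul_pow]
            norm_num
    have hsum2 : Summable (fun i : ℕ => fb n * (1/2)^i) :=
      (summable_geometric_two).mul_left (fb n)
    have := Summable.tsum_le_tsum hle (htail n) hsum2
    rw [tsum_mul_left, tsum_geometric_two] at this
    linarith
  -- rationality data
  have hrpos : 0 < r := by
    have hS : (0:ℝ) < ∑' n, fb n := by
      have h0 : T 0 = ∑' n, fb n := tsum_congr fun i => by rw [Nat.add_zero]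
      rw [← h0]
      exact hT_pos 0
    rw [← Rat.cast_pos (K := ℝ)]
    rw [hrS]
    exact hS
  have hpnum : 0 < r.num := Rat.num_pos.2 hrpos
  have hqden : 0 < (r.den : ℤ) := by exact_mod_cast r.pos
  have hdenR : ((r.den : ℝ)) ≠ 0 := by
    have := r.pos
    positivity
  set Q : ℕ → ℤ := fun n => (r.den : ℤ) * ∏ k ∈ range n, (b k : ℤ) with hQdef
  set A : ℕ → ℤ := fun n => r.num * ∏ k ∈ range n, (b k : ℤ)
    - (r.den : ℤ) * ∑ k ∈ range n, ∏ j ∈ (range n).erase k, (b j : ℤ) with hAdef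
  have hQpos : ∀ n, 0 < Q n := by
    intro n
    apply mul_pos hqden
    apply prod_pos
    intro k _
    exact_mod_cast hbpos k
  have hkey : ∀ n, ((A n : ℤ) : ℝ) = ((Q n : ℤ) : ℝ) * T n := by
    intro n
    have hTn : T n = (r : ℝ) - ∑ k ∈ range n, fb k := by
      have h0 := Summable.sum_add_tsum_nat_add (f := fb) n hsum
      rw [hrS]
      have h1 : (∑' i, fb (i + n)) = T n := rfl
      linarith [h0, h1]
    have hcast : ((A n : ℤ) : ℝ) = (r.num : ℝ) * ∏ k ∈ range n, (b k : ℝ)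
        - (r.den : ℝ) * ∑ k ∈ range n, ∏ j ∈ (range n).erase k, (b j : ℝ) := by
      simp only [hAdef]
      push_cast
      ring
    have hQcast : ((Q n : ℤ) : ℝ) = (r.den : ℝ) * ∏ k ∈ range n, (b k : ℝ) := by
      simp only [hQdef]
      push_cast
      ring
    have hprodsum : (∏ k ∈ range n, (b k : ℝ)) * ∑ k ∈ range n, fb k
        = ∑ k ∈ range n, ∏ j ∈ (range n).erase k, (b j : ℝ) := by
      rw [mul_sum]
      refine sum_congr rfl fun k hk => ?_
      have h1 : (b k : ℝ) * ∏ j ∈ (range n).erase k, (b j : ℝ) = ∏ j ∈ range n, (b j : ℝ) :=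
        Finset.mul_prod_erase (range n) (fun j => ((b j : ℕ) : ℝ)) hk
      have hb0 : (b k : ℝ) ≠ 0 := (hbR k).ne'
      simp only [hfb]
      rw [← h1]
      field_simp
    have hrcast : (r : ℝ) = (r.num : ℝ) / (r.den : ℝ) := by rw [Rat.cast_def]
    rw [hcast, hQcast, hTn, hrcast, mul_sub]
    congr 1
    · field_simp
    · rw [mul_assoc, hprodsum]
  have hApos : ∀ n, 0 < A n := by
    intro n
    have h0 : (0:ℝ) < ((A n : ℤ) : ℝ) := by
      rw [hkey n]
      apply mul_pos _ (hT_pos n)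
      exact_mod_cast hQpos n
    exact_mod_cast h0
  have hQrec : ∀ n, Q (n+1) = (b n : ℤ) * Q n := by
    intro n
    simp only [hQdef, prod_range_succ]
    ring
  have hfbmul : ∀ n, (b n : ℝ) * fb n = 1 := by
    intro n
    simp only [hfb]
    rw [mul_one_div, div_self (hbR n).ne']
  have hArec : ∀ n, A (n+1) = (b n : ℤ) * A n - Q n := by
    intro n
    have hTs : T (n+1) = T n - fb n := by linarith [hT_succ n]
    have h1 : ((A (n+1) : ℤ) : ℝ) = (((b n : ℤ) * A n - Q n : ℤ) : ℝ) := by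
      rw [hkey (n+1), hQrec n]
      push_cast
      rw [hkey n, hTs]
      linear_combination (-((Q n : ℤ) : ℝ)) * hfbmul n
    exact_mod_cast h1
  -- the interval inequalities
  refine ⟨N₀, Q, A, fun n hn => ?_⟩
  have hn1 : N₀ ≤ n + 1 := le_trans hn (Nat.le_succ n)
  have hn2 : N₀ ≤ n + 2 := le_trans hn1 (Nat.le_succ (n+1))
  have Bpos := hbR n
  have Cpos := hbR (n+1)
  have T'pos := hT_pos (n+1)
  have hQR : (0:ℝ) < ((Q n : ℤ) : ℝ) := by exact_mod_cast hQpos n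
  have f1 : 1 < (b (n+1) : ℝ) * T (n+1) := by
    have h0 := hT_gt (n+1)
    have h1 := mul_lt_mul_of_pos_left h0 Cpos
    rwa [hfbmul (n+1)] at h1
  have f2 := hhi n hn
  have f3 := hlo n hn
  have f4 := hb100 n hn
  have f5 : (b n : ℝ) * T n = 1 + (b n : ℝ) * T (n+1) := by
    rw [hT_succ n, mul_add, hfbmul n]
  -- goal 1 : T n < 2 * b n * T (n+1)
  have g1 : (4:ℝ)/5 < (b n : ℝ)^2 * T (n+1) := by
    nlinarith [f1, f2, T'pos]
  have g2 : 100 * ((b n : ℝ) * T (n+1)) ≤ (b n : ℝ)^2 * T (n+1) := by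
    nlinarith [mul_nonneg (mul_nonneg Bpos.le (by linarith : (0:ℝ) ≤ (b n : ℝ) - 100)) T'pos.le]
  have goal1 : T n < 2 * ((b n : ℝ) * T (n+1)) := by
    have hmul : (b n : ℝ) * T n < (b n : ℝ) * (2 * ((b n : ℝ) * T (n+1))) := by
      rw [f5]
      nlinarith [g1, g2, T'pos]
    exact lt_of_mul_lt_mul_left hmul Bpos.le
  -- goal 2 : 2 * b n * T (n+1) < 3 * T n
  have k1 : (b (n+2) : ℝ) * fb (n+2) = 1 := hfbmul (n+2)
  have k2 : T (n+1) ≤ fb (n+1) + 2 * fb (n+2) := by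
    have := hT_ub (n+2) hn2
    linarith [hT_succ (n+1)]
  have k3 : (b (n+1) : ℝ)^2 * fb (n+2) < 5/4 := by
    have hD := hlo (n+1) hn1
    have hfb2 := hfb_pos (n+2)
    have hprod := mul_pos (sub_pos.2 hD) hfb2
    nlinarith [hprod, k1]
  have k4 : (b (n+1) : ℝ)^2 * T (n+1) ≤ (b (n+1) : ℝ) + 5/2 := by
    have h0 : (b (n+1) : ℝ)^2 * fb (n+1) = (b (n+1) : ℝ) := by
      rw [pow_two, mul_assoc, hfbmul (n+1), mul_one]
    have m1 := mul_le_mul_of_nonneg_left k2 (sq_nonneg ((b (n+1) : ℝ)))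
    nlinarith [m1, h0, k3]
  have hB2C : (b n : ℝ)^2 < 5/4 * (b (n+1) : ℝ) := by linarith [f3]
  have hC100 : (100:ℝ) ≤ (b (n+1) : ℝ) := hb100 (n+1) hn1
  have hCT'pos : (0:ℝ) < (b (n+1) : ℝ) * T (n+1) := mul_pos Cpos T'pos
  have k5 : (b (n+1) : ℝ) * ((b n : ℝ)^2 * T (n+1)) < 5/4 * ((b (n+1) : ℝ) + 5/2) := by
    have s1 : (b n : ℝ)^2 * ((b (n+1) : ℝ) * T (n+1))
        < (5/4 * (b (n+1) : ℝ)) * ((b (n+1) : ℝ) * T (n+1)) :=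
      mul_lt_mul_of_pos_right hB2C hCT'pos
    have s2 : (5/4 * (b (n+1) : ℝ)) * ((b (n+1) : ℝ) * T (n+1))
        = 5/4 * ((b (n+1) : ℝ)^2 * T (n+1)) := by ring
    have s3 : 5/4 * ((b (n+1) : ℝ)^2 * T (n+1)) ≤ 5/4 * ((b (n+1) : ℝ) + 5/2) := by
      linarith [k4]
    calc (b (n+1) : ℝ) * ((b n : ℝ)^2 * T (n+1))
        = (b n : ℝ)^2 * ((b (n+1) : ℝ) * T (n+1)) := by ring
      _ < (5/4 * (b (n+1) : ℝ)) * ((b (n+1) : ℝ) * T (n+1)) := s1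
      _ = 5/4 * ((b (n+1) : ℝ)^2 * T (n+1)) := s2
      _ ≤ 5/4 * ((b (n+1) : ℝ) + 5/2) := s3
  have k6 : (b n : ℝ)^2 * T (n+1) < 13/10 := by
    have h0 : ((b n : ℝ)^2 * T (n+1)) * (b (n+1) : ℝ) < (13/10) * (b (n+1) : ℝ) := by
      nlinarith [k5, hC100]
    exact lt_of_mul_lt_mul_right h0 Cpos.le
  have goal2 : 2 * ((b n : ℝ) * T (n+1)) < 3 * T n := by
    have hmul : (b n : ℝ) * (2 * ((b n : ℝ) * T (n+1))) < (b n : ℝ) * (3 * T n) := by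
      have h0 : (b n : ℝ) * (3 * T n) = 3 + 3 * ((b n : ℝ) * T (n+1)) := by
        linear_combination 3 * f5
      rw [h0]
      nlinarith [k6, T'pos, Bpos]
    exact lt_of_mul_lt_mul_left hmul Bpos.le
  -- convert to integers
  have ineq1 : A n < 2 * A (n+1) := by
    have e2 : ((Q (n+1) : ℤ) : ℝ) * T (n+1) = ((Q n : ℤ) : ℝ) * ((b n : ℝ) * T (n+1)) := by
      rw [hQrec n]
      push_cast
      ring
    have h0 : ((A n : ℤ) : ℝ) < 2 * ((A (n+1) : ℤ) : ℝ) := by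
      rw [hkey n, hkey (n+1), e2]
      linarith [mul_lt_mul_of_pos_left goal1 hQR]
    exact_mod_cast h0
  have ineq2 : 2 * A (n+1) < 3 * A n := by
    have e2 : ((Q (n+1) : ℤ) : ℝ) * T (n+1) = ((Q n : ℤ) : ℝ) * ((b n : ℝ) * T (n+1)) := by
      rw [hQrec n]
      push_cast
      ring
    have h0 : 2 * ((A (n+1) : ℤ) : ℝ) < 3 * ((A n : ℤ) : ℝ) := by
      rw [hkey n, hkey (n+1), e2]
      linarith [mul_lt_mul_of_pos_left goal2 hQR]
    exact_mod_cast h0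
  exact ⟨hArec n, hQrec n, hApos n, ineq1, ineq2⟩

lemma t2_main {α : ℝ} (hα : 1 < α)
    (hbad : ¬ IsType2IrrationalitySequence (fun n => (⌊α ^ (2 ^ (n + 1))⌋).toNat)) :
    ∃ N : ℕ, ∃ Q0 A0 : ℤ, T2BadData α N Q0 A0 := by
  have hx1 : ∀ n : ℕ, (1:ℝ) < α ^ 2 ^ (n+1) := fun n => one_lt_pow₀ hα (by positivity)
  have hfloor_pos : ∀ n : ℕ, 0 < ⌊α ^ 2 ^ (n+1)⌋ := by
    intro n
    have : (1:ℤ) ≤ ⌊α ^ 2 ^ (n+1)⌋ := Int.le_floor.2 (by exact_mod_cast (hx1 n).le)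
    omega
  have hapos : ∀ n : ℕ, 0 < (⌊α ^ (2 ^ (n + 1))⌋).toNat := by
    intro n
    have := hfloor_pos n
    omega
  have hmono : Monotone (fun n => (⌊α ^ (2 ^ (n + 1))⌋).toNat) := by
    apply monotone_nat_of_le_succ
    intro n
    have h1 : α ^ 2 ^ (n+1) ≤ α ^ 2 ^ (n+2) :=
      pow_le_pow_right₀ hα.le (Nat.pow_le_pow_right (by norm_num) (by omega))
    exact Int.toNat_le_toNat (Int.floor_le_floor h1)
  have hnot : ¬ ∀ b : ℕ → ℕ, (∀ n, 0 < b n) →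
      Tendsto (fun n => (b n : ℝ) / (((fun n => (⌊α ^ (2 ^ (n + 1))⌋).toNat) n : ℕ) : ℝ))
        atTop (nhds 1) →
      Irrational (∑' n, 1 / (b n : ℝ)) := fun hall => hbad ⟨hmono, hapos, hall⟩
  push_neg at hnot
  obtain ⟨b, hbpos, hbtend, hirr⟩ := hnot
  obtain ⟨r, hrS⟩ : ∃ q : ℚ, (q:ℝ) = ∑' n, 1 / (b n : ℝ) := by
    rwa [Irrational, not_not, Set.mem_range] at hirr
  have hr : Tendsto (fun n => (b n : ℝ) / α ^ 2 ^ (n+1)) atTop (nhds 1) :=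
    t2_lemma_ratio hα b hbpos hbtend
  obtain ⟨hbtop, hs⟩ := t2_lemma_growth hα b hbpos hr
  obtain ⟨N₀, Q, A, hrec⟩ := t2_lemma_rec b hbpos hbtop hs r hrS
  exact ⟨N₀, Q N₀, A N₀, b, Q, A, rfl, rfl, hrec, hr⟩

theorem type2_complement_countable :
    Set.Countable {α : ℝ | 1 < α ∧
      ¬ IsType2IrrationalitySequence (fun n => (⌊α ^ (2 ^ (n + 1))⌋).toNat)} := by
  have hsub : {α : ℝ | 1 < α ∧
      ¬ IsType2IrrationalitySequence (fun n => (⌊α ^ (2 ^ (n + 1))⌋).toNat)} ⊆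
      ⋃ d : ℕ × ℤ × ℤ, {α : ℝ | 1 < α ∧ T2BadData α d.1 d.2.1 d.2.2} := by
    rintro α ⟨hα, hbad⟩
    obtain ⟨N, Q0, A0, h⟩ := t2_main hα hbad
    exact Set.mem_iUnion.2 ⟨(N, Q0, A0), hα, h⟩
  exact Set.Countable.mono hsub
    (Set.countable_iUnion fun d => (t2_badData_subsingleton d.1 d.2.1 d.2.2).countable)
end

section
/- For any positive real number r, the pseudo-greedy expansion (a_n) of r, defined recursively by a_n = ⌊(r − ∑_{k=1}^{n−1} 1/a_k)^{−1} + 1⌉, satisfies r = ∑_{n=1}^∞ 1/a_n. -/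
open Filter Finset Topology

theorem pseudo_greedy_expansion_sums
    (r : ℝ) (hr : 0 < r) (a : ℕ → ℤ)
    (ha : ∀ n, a n = round ((r - ∑ k ∈ Finset.range n, 1 / (a k : ℝ))⁻¹ + 1)) :
    r = ∑' n, 1 / (a n : ℝ) := by
  set x : ℕ → ℝ := fun n => r - ∑ k ∈ Finset.range n, 1 / (a k : ℝ) with hx
  have hx0 : x 0 = r := by simp [hx]
  have hxsucc : ∀ n, x (n + 1) = x n - 1 / (a n : ℝ) := by
    intro n
    simp only [hx, Finset.sum_range_succ]
    ring
  set q : ℝ := 3 * r / (2 + 3 * r) with hq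
  have h2r : (0:ℝ) < 2 + 3 * r := by linarith
  have hq0 : 0 < q := by positivity
  have hq1 : q < 1 := by
    rw [hq, div_lt_one h2r]; linarith
  have step : ∀ n, 0 < x n → x n ≤ r →
      (1:ℝ) ≤ (a n : ℝ) ∧ 0 < x (n + 1) ∧ x (n + 1) ≤ q * x n := by
    intro n hxn hxr
    set y : ℝ := (x n)⁻¹ with hy
    have hy0 : 0 < y := by positivity
    have han : (a n : ℝ) = (round (y + 1) : ℤ) := by
      rw [ha n]
    have habs := abs_sub_round (y + 1)
    rw [abs_le] at habs
    have hlow : y + 1 / 2 ≤ (a n : ℝ) := by rw [han]; linarith [habs.2]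
    have hhigh : (a n : ℝ) ≤ y + 3 / 2 := by rw [han]; linarith [habs.1]
    have hapos : (0:ℝ) < (a n : ℝ) := by linarith
    have haz : (0:ℤ) < a n := by exact_mod_cast hapos
    have ha1 : (1:ℝ) ≤ (a n : ℝ) := by exact_mod_cast haz
    refine ⟨ha1, ?_, ?_⟩
    · have h1 : 1 / (a n : ℝ) ≤ 1 / (y + 1 / 2) := by
        apply one_div_le_one_div_of_le (by linarith) hlow
      have h2 : 1 / (y + 1 / 2) < 1 / y := by
        apply one_div_lt_one_div_of_lt hy0 (by linarith)
      have h3 : 1 / y = x n := by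
        rw [hy, one_div, inv_inv]
      rw [hxsucc n]
      linarith
    · have h1 : 1 / (y + 3 / 2) ≤ 1 / (a n : ℝ) := by
        apply one_div_le_one_div_of_le hapos hhigh
      have h4 : x (n + 1) ≤ x n - 1 / (y + 3 / 2) := by
        rw [hxsucc n]; linarith
      have h5 : x n - 1 / (y + 3 / 2) = 3 * (x n) ^ 2 / (2 + 3 * x n) := by
        have hxne : x n ≠ 0 := ne_of_gt hxn
        have hd1 : y + 3 / 2 ≠ 0 := ne_of_gt (by linarith)
        have hd2 : (2 + 3 * x n) ≠ 0 := ne_of_gt (by linarith)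
        rw [hy] at hd1 ⊢
        field_simp
        ring
      have hqx : q * x n = 3 * r * x n / (2 + 3 * r) := by rw [hq]; ring
      have h6 : 3 * (x n) ^ 2 / (2 + 3 * x n) ≤ q * x n := by
        rw [hqx, div_le_div_iff₀ (by linarith : (0:ℝ) < 2 + 3 * x n) h2r]
        nlinarith
      exact h4.trans (by rw [h5]; exact h6)
  have key : ∀ n, 0 < x n ∧ x n ≤ r := by
    intro n
    induction n with
    | zero => exact ⟨hx0 ▸ hr, le_of_eq hx0⟩
    | succ m ih =>
      obtain ⟨_, hpos, hle⟩ := step m ih.1 ih.2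
      refine ⟨hpos, ?_⟩
      calc x (m+1) ≤ q * x m := hle
        _ ≤ 1 * x m := by nlinarith [ih.1]
        _ = x m := one_mul _
        _ ≤ r := ih.2
  have ha1 : ∀ n, (1:ℝ) ≤ (a n : ℝ) := fun n => (step n (key n).1 (key n).2).1
  have bound : ∀ n, x n ≤ q ^ n * r := by
    intro n
    induction n with
    | zero => simp [hx0]
    | succ m ih =>
      have := (step m (key m).1 (key m).2).2.2
      calc x (m+1) ≤ q * x m := this
        _ ≤ q * (q ^ m * r) := by nlinarith [key m]
        _ = q ^ (m+1) * r := by ring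
  have htend0 : Tendsto x atTop (𝓝 0) := by
    have hgeo : Tendsto (fun n => q ^ n * r) atTop (𝓝 0) := by
      have := (tendsto_pow_atTop_nhds_zero_of_lt_one hq0.le hq1).mul_const r
      simpa using this
    exact squeeze_zero (fun n => (key n).1.le) bound hgeo
  have htend : Tendsto (fun n => ∑ k ∈ Finset.range n, 1 / (a k : ℝ)) atTop (𝓝 r) := by
    have := tendsto_const_nhds (x := r) (f := atTop (α := ℕ)) |>.sub htend0
    simp only [sub_zero] at this
    convert this using 2 with n
    simp [hx]
  have hnn : ∀ n, 0 ≤ 1 / (a n : ℝ) := fun n =>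
    le_of_lt (one_div_pos.mpr (lt_of_lt_of_le zero_lt_one (ha1 n)))
  have hsummable : Summable (fun n => 1 / (a n : ℝ)) := by
    apply summable_of_sum_range_le (c := r) hnn
    intro n
    have := (key n).1
    simp only [hx] at this
    linarith
  have hhs : HasSum (fun n => 1 / (a n : ℝ)) r :=
    (hsummable.hasSum_iff_tendsto_nat).mpr htend
  exact hhs.tsum_eq.symm
end

section
/- Let (a_n) be a sequence of positive integers with lim a_n²/a_{n+1} = 1 and ∑ 1/a_n < ∞. Then there exists N ≥ 0 such that the shifted sequence (a_{N+n})_{n≥1} is the pseudo-greedy expansion of ∑_{n=1}^∞ 1/a_{N+n}, and the gap sequence ε_n = x_n^{−1} + 1 − a_{N+n} of this expansion converges to 0. -/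
open Filter Finset

/-- Pure algebra: if `x` lies in the expected window around `1/b + 1/b²`, then
`x⁻¹ + 1 - b` is small. -/
lemma pg_alg_bound (b B δ x : ℝ) (hB : 8 ≤ B) (hbB : B ≤ b) (hδ0 : 0 < δ) (hδ : δ ≤ 1/8)
    (hx1 : 1/b + 1/((1+δ)*b^2) ≤ x) (hx2 : x ≤ 1/b + (1+2*δ+5/B)/b^2) :
    |x⁻¹ + 1 - b| ≤ 3*δ + 6/B := by
  have hB0 : (0:ℝ) < B := by linarith
  have hb0 : (0:ℝ) < b := by linarith
  have hδ1 : (0:ℝ) < 1 + δ := by linarith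
  have hbB1 : (1:ℝ) ≤ b / B := (one_le_div hB0).2 hbB
  have h6B : (6:ℝ) ≤ 6/B * b := by
    rw [div_mul_eq_mul_div, le_div_iff₀ hB0]; nlinarith
  have h5B0 : (0:ℝ) < 5/B := by positivity
  have h6B0 : (0:ℝ) < 6/B := by positivity
  have hL0 : (0:ℝ) < 1/b + 1/((1+δ)*b^2) := by positivity
  have hx0 : (0:ℝ) < x := lt_of_lt_of_le hL0 hx1
  have hU0 : (0:ℝ) < 1/b + (1+2*δ+5/B)/b^2 := by positivity
  rw [abs_le]
  constructor
  · -- lower bound: x⁻¹ + 1 - b ≥ -(3δ + 6/B)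
    have hinv : (1/b + (1+2*δ+5/B)/b^2)⁻¹ ≤ x⁻¹ := inv_anti₀ hx0 hx2
    have hc : b - 1 - (3*δ + 6/B) ≤ (1/b + (1+2*δ+5/B)/b^2)⁻¹ := by
      have hU : 1/b + (1+2*δ+5/B)/b^2 = (b + (1+2*δ+5/B))/b^2 := by
        field_simp
      rw [hU, inv_div, le_div_iff₀ (by positivity : (0:ℝ) < b + (1+2*δ+5/B))]
      have h56 : (5:ℝ)/B ≤ 6/B := by gcongr <;> norm_num
      nlinarith [mul_nonneg (by linarith : (0:ℝ) ≤ 6/B - 5/B + δ) hb0.le,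
        mul_pos (by positivity : (0:ℝ) < 1+3*δ+6/B) (by positivity : (0:ℝ) < 1+2*δ+5/B)]
    linarith
  · -- upper bound: x⁻¹ + 1 - b ≤ 3δ + 6/B
    have hinv : x⁻¹ ≤ (1/b + 1/((1+δ)*b^2))⁻¹ := inv_anti₀ hL0 hx1
    have hc : (1/b + 1/((1+δ)*b^2))⁻¹ ≤ b - 1 + (3*δ + 6/B) := by
      have hL : 1/b + 1/((1+δ)*b^2) = ((1+δ)*b + 1)/((1+δ)*b^2) := by
        field_simp
      rw [hL, inv_div, div_le_iff₀ (by positivity : (0:ℝ) < (1+δ)*b + 1)]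
      nlinarith [mul_pos hδ0 hb0, mul_pos h6B0 hb0, mul_le_mul_of_nonneg_left h6B hδ1.le]
    linarith

set_option maxHeartbeats 1000000 in
/-- Key estimate: under eventual bounds on size and ratio, the tail sum
inverse is close to `a n - 1`. -/
lemma pg_key (a : ℕ → ℕ) (hpos : ∀ n, 0 < a n)
    (hsum : Summable (fun n => 1 / (a n : ℝ)))
    (δ B : ℝ) (hδ0 : 0 < δ) (hδ : δ ≤ 1/8) (hB : 8 ≤ B)
    (M : ℕ)
    (hBa : ∀ m, M ≤ m → B ≤ (a m : ℝ))
    (h1 : ∀ m, M ≤ m → (1-δ) * (a m : ℝ)^2 ≤ (a (m+1) : ℝ))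
    (h2 : ∀ m, M ≤ m → (a (m+1) : ℝ) ≤ (1+δ) * (a m : ℝ)^2)
    (n : ℕ) (hn : M ≤ n) :
    |(∑' k, 1 / (a (n + k) : ℝ))⁻¹ + 1 - (a n : ℝ)| ≤ 3*δ + 6/B := by
  have apos : ∀ m, (0:ℝ) < (a m : ℝ) := fun m => by exact_mod_cast hpos m
  have hsum' : ∀ j : ℕ, Summable (fun k => 1 / (a (j + k) : ℝ)) := by
    intro j
    have h := (summable_nat_add_iff (f := fun n => 1 / (a n : ℝ)) j).2 hsum
    exact h.congr (fun k => by rw [add_comm])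
  have hB0 : (0:ℝ) < B := by linarith
  have hδ' : (7:ℝ)/8 ≤ 1 - δ := by linarith
  set b : ℝ := (a n : ℝ) with hbdef
  have hb0 : (0:ℝ) < b := apos n
  have hbB : B ≤ b := hBa n hn
  set q : ℝ := ((1-δ)*B)⁻¹ with hqdef
  have hdB0 : (0:ℝ) < (1-δ)*B := by nlinarith
  have hq0 : 0 < q := inv_pos.2 hdB0
  have hq7 : q ≤ 1/7 := by
    rw [hqdef]
    rw [inv_le_comm₀ (by nlinarith) (by norm_num)]
    norm_num
    nlinarith
  have hq1 : q < 1 := lt_of_le_of_lt hq7 (by norm_num)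
  have hqB : q * ((1-δ)*B) = 1 := inv_mul_cancel₀ (ne_of_gt hdB0)
  -- step bound
  have step : ∀ m, M ≤ m → (1 / (a (m+1) : ℝ)) ≤ q * (1 / (a m : ℝ)) := by
    intro m hm
    have h1' := h1 m hm
    have hBm := hBa m hm
    have hge : (a m : ℝ) * ((1-δ)*B) ≤ (a (m+1) : ℝ) := by
      nlinarith [apos m]
    have : 1 / (a (m+1) : ℝ) ≤ 1 / ((a m : ℝ) * ((1-δ)*B)) :=
      one_div_le_one_div_of_le (mul_pos (apos m) hdB0) hge
    calc (1 / (a (m+1) : ℝ)) ≤ 1 / ((a m : ℝ) * ((1-δ)*B)) := this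
      _ = q * (1 / (a m : ℝ)) := by rw [hqdef]; field_simp
  -- geometric bound for the tail starting at n+1
  have geom : ∀ k, (1 / (a ((n+1) + k) : ℝ)) ≤ (1 / (a (n+1) : ℝ)) * q^k := by
    intro k
    induction k with
    | zero => simp
    | succ k ih =>
      have hidx : (n+1) + (k+1) = ((n+1)+k) + 1 := by omega
      rw [hidx, pow_succ]
      calc (1 / (a (((n+1)+k) + 1) : ℝ)) ≤ q * (1 / (a ((n+1)+k) : ℝ)) :=
            step _ (by omega)
        _ ≤ q * ((1 / (a (n+1) : ℝ)) * q^k) := by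
            apply mul_le_mul_of_nonneg_left ih hq0.le
        _ = (1 / (a (n+1) : ℝ)) * (q^k * q) := by ring
  -- tail sum at n+1
  have Ttail : (∑' k, 1 / (a ((n+1) + k) : ℝ)) ≤ (1 / (a (n+1) : ℝ)) * (1-q)⁻¹ := by
    have hgs : Summable (fun k : ℕ => (1 / (a (n+1) : ℝ)) * q^k) :=
      (summable_geometric_of_lt_one hq0.le hq1).mul_left _
    calc (∑' k, 1 / (a ((n+1) + k) : ℝ))
        ≤ ∑' k : ℕ, (1 / (a (n+1) : ℝ)) * q^k := Summable.tsum_le_tsum geom (hsum' (n+1)) hgs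
      _ = (1 / (a (n+1) : ℝ)) * (1-q)⁻¹ := by
          rw [tsum_mul_left, tsum_geometric_of_lt_one hq0.le hq1]
  -- splitting off the first term
  have Tsplit : (∑' k, 1 / (a (n + k) : ℝ))
      = 1/b + (∑' k, 1 / (a ((n+1) + k) : ℝ)) := by
    have h2' : (∑' k : ℕ, 1 / (a (n + (k+1)) : ℝ)) = ∑' k, 1 / (a ((n+1) + k) : ℝ) :=
      tsum_congr fun k => by rw [show n + (k+1) = (n+1) + k from by omega]
    rw [Summable.tsum_eq_zero_add (hsum' n), Nat.add_zero, h2']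
  -- lower bound on full tail
  have hfirst : 1 / (a (n+1) : ℝ) ≤ ∑' k, 1 / (a ((n+1) + k) : ℝ) := by
    have := Summable.le_tsum (hsum' (n+1)) 0 (fun j _ => by positivity)
    simpa using this
  have hlow : 1/b + 1/((1+δ)*b^2) ≤ ∑' k, 1 / (a (n + k) : ℝ) := by
    rw [Tsplit]
    have h2' := h2 n hn
    have : 1/((1+δ)*b^2) ≤ 1 / (a (n+1) : ℝ) :=
      one_div_le_one_div_of_le (apos (n+1)) h2'
    linarith
  -- upper bound on full tail
  have hCu : (1/((1-δ)*b^2)) * (1-q)⁻¹ ≤ (1+2*δ+5/B)/b^2 := by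
    have hq2 : (1-q)⁻¹ ≤ 1 + 2*q := by
      rw [inv_eq_one_div, div_le_iff₀ (by linarith : (0:ℝ) < 1 - q)]
      nlinarith
    have hd2 : (1-δ)⁻¹ ≤ 1 + 2*δ := by
      rw [inv_eq_one_div, div_le_iff₀ (by linarith : (0:ℝ) < 1 - δ)]
      nlinarith
    have hq2B : q ≤ 2/B := by
      rw [le_div_iff₀ hB0]
      nlinarith
    have key : (1-δ)⁻¹ * (1-q)⁻¹ ≤ 1+2*δ+5/B := by
      calc (1-δ)⁻¹ * (1-q)⁻¹ ≤ (1+2*δ) * (1+2*q) := by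
            apply mul_le_mul hd2 hq2 (inv_nonneg.2 (by linarith)) (by linarith)
        _ ≤ 1+2*δ+5/B := by
            have h2B : (0:ℝ) < 2/B := by positivity
            have : 2*q*(1+2*δ) ≤ 2*(2/B)*(1+2*δ) := by nlinarith
            have h54 : (1:ℝ)+2*δ ≤ 5/4 := by linarith
            have : 2*(2/B)*(1+2*δ) ≤ 2*(2/B)*(5/4) := by nlinarith
            have h45 : 2*(2/B)*(5/4) = 5/B := by ring
            nlinarith [mul_pos hq0 hδ0]
    calc (1/((1-δ)*b^2)) * (1-q)⁻¹ = ((1-δ)⁻¹ * (1-q)⁻¹) / b^2 := by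
          rw [one_div, mul_inv]; ring
      _ ≤ (1+2*δ+5/B)/b^2 := (div_le_div_iff_of_pos_right (pow_pos hb0 2)).2 key
  have hup : (∑' k, 1 / (a (n + k) : ℝ)) ≤ 1/b + (1+2*δ+5/B)/b^2 := by
    rw [Tsplit]
    have hd0 : (0:ℝ) < (1-δ) * b^2 := by nlinarith [sq_nonneg b]
    have hmid : 1 / (a (n+1) : ℝ) ≤ 1/((1-δ)*b^2) :=
      one_div_le_one_div_of_le hd0 (h1 n hn)
    have : (∑' k, 1 / (a ((n+1) + k) : ℝ)) ≤ (1/((1-δ)*b^2)) * (1-q)⁻¹ := by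
      calc (∑' k, 1 / (a ((n+1) + k) : ℝ)) ≤ (1 / (a (n+1) : ℝ)) * (1-q)⁻¹ := Ttail
        _ ≤ (1/((1-δ)*b^2)) * (1-q)⁻¹ := by
            apply mul_le_mul_of_nonneg_right hmid (inv_nonneg.2 (by linarith))
    linarith
  exact pg_alg_bound b B δ _ hB hbB hδ0 hδ hlow hup

theorem eventually_pseudo_greedy
    (a : ℕ → ℕ) (hpos : ∀ n, 0 < a n)
    (hratio : Tendsto (fun n => (a n : ℝ) ^ 2 / (a (n + 1) : ℝ)) atTop (nhds 1))
    (hsum : Summable (fun n => 1 / (a n : ℝ))) :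
    ∃ N : ℕ,
      (∀ n, (a (N + n) : ℤ) =
        round (((∑' m, 1 / (a (N + m) : ℝ)) - ∑ k ∈ Finset.range n, 1 / (a (N + k) : ℝ))⁻¹ + 1))
      ∧ Tendsto (fun n =>
          ((∑' m, 1 / (a (N + m) : ℝ)) - ∑ k ∈ Finset.range n, 1 / (a (N + k) : ℝ))⁻¹
            + 1 - (a (N + n) : ℝ)) atTop (nhds 0) := by
  have apos : ∀ m, (0:ℝ) < (a m : ℝ) := fun m => by exact_mod_cast hpos m
  have hsum' : ∀ j : ℕ, Summable (fun k => 1 / (a (j + k) : ℝ)) := by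
    intro j
    have h := (summable_nat_add_iff (f := fun n => 1 / (a n : ℝ)) j).2 hsum
    exact h.congr (fun k => by rw [add_comm])
  -- the eventual hypotheses of pg_key
  have hev : ∀ δ B : ℝ, 0 < δ → δ ≤ 1/8 → 8 ≤ B →
      ∃ M : ℕ, ∀ m, M ≤ m → (B ≤ (a m : ℝ) ∧ (1-δ) * (a m : ℝ)^2 ≤ (a (m+1) : ℝ) ∧
        (a (m+1) : ℝ) ≤ (1+δ) * (a m : ℝ)^2) := by
    intro δ B hδ0 hδ hB
    have hB0 : (0:ℝ) < B := by linarith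
    have ht0 : Tendsto (fun n => 1 / (a n : ℝ)) atTop (nhds 0) := hsum.tendsto_atTop_zero
    obtain ⟨M1, hM1⟩ := (Metric.tendsto_atTop.1 ht0) (1/B) (by positivity)
    obtain ⟨M2, hM2⟩ := (Metric.tendsto_atTop.1 hratio) (δ/2) (by positivity)
    refine ⟨max M1 M2, fun m hm => ?_⟩
    have hm1 := hM1 m (le_trans (le_max_left _ _) hm)
    have hm2 := hM2 m (le_trans (le_max_right _ _) hm)
    rw [Real.dist_eq, sub_zero] at hm1
    rw [Real.dist_eq] at hm2
    have ha0 := apos m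
    have ha1 := apos (m+1)
    have hBam : B ≤ (a m : ℝ) := by
      have h1 : 1 / (a m : ℝ) < 1/B := lt_of_abs_lt hm1
      have := lt_of_one_div_lt_one_div ha0 h1
      linarith
    have hr := abs_lt.1 hm2
    have hrlo : (1 - δ/2) * (a (m+1) : ℝ) < (a m : ℝ)^2 := by
      have : 1 - δ/2 < (a m : ℝ)^2 / (a (m+1) : ℝ) := by linarith [hr.1]
      calc (1 - δ/2) * (a (m+1) : ℝ) < ((a m : ℝ)^2 / (a (m+1) : ℝ)) * (a (m+1) : ℝ) :=
            mul_lt_mul_of_pos_right this ha1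
        _ = (a m : ℝ)^2 := by field_simp
    have hrhi : (a m : ℝ)^2 < (1 + δ/2) * (a (m+1) : ℝ) := by
      have h2 : (a m : ℝ)^2 / (a (m+1) : ℝ) < 1 + δ/2 := by linarith [hr.2]
      calc (a m : ℝ)^2 = ((a m : ℝ)^2 / (a (m+1) : ℝ)) * (a (m+1) : ℝ) := by field_simp
        _ < (1 + δ/2) * (a (m+1) : ℝ) := mul_lt_mul_of_pos_right h2 ha1
    refine ⟨hBam, ?_, ?_⟩
    · nlinarith [mul_pos hδ0 ha1, sq_nonneg δ, mul_nonneg (mul_nonneg hδ0.le hδ0.le) ha1.le]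
    · nlinarith [mul_pos hδ0 ha1, sq_nonneg δ, mul_nonneg (mul_nonneg hδ0.le hδ0.le) ha1.le]
  -- tail identity
  have htail : ∀ N n : ℕ,
      (∑' m, 1 / (a (N + m) : ℝ)) - ∑ k ∈ Finset.range n, 1 / (a (N + k) : ℝ)
        = ∑' k, 1 / (a ((N + n) + k) : ℝ) := by
    intro N n
    have h := Summable.sum_add_tsum_nat_add (f := fun i => 1 / (a (N + i) : ℝ)) n (hsum' N)
    have h2 : (∑' i, 1 / (a (N + (i + n)) : ℝ)) = ∑' k, 1 / (a ((N + n) + k) : ℝ) :=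
      tsum_congr fun i => by rw [show N + (i + n) = (N + n) + i from by omega]
    rw [← h2]
    linarith [h]
  obtain ⟨N, hN⟩ := hev (1/8) 100 (by norm_num) le_rfl (by norm_num)
  refine ⟨N, ?_, ?_⟩
  · intro n
    have hk := pg_key a hpos hsum (1/8) 100 (by norm_num) le_rfl (by norm_num) N
      (fun m hm => (hN m hm).1) (fun m hm => (hN m hm).2.1) (fun m hm => (hN m hm).2.2)
      (N + n) (by omega)
    rw [htail N n]
    have hb := abs_le.1 hk
    rw [round_eq]
    refine ((Int.floor_eq_iff).2 ⟨?_, ?_⟩).symm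
    · push_cast
      norm_num at hb ⊢
      linarith [hb.1]
    · push_cast
      norm_num at hb ⊢
      linarith [hb.2]
  · rw [Metric.tendsto_atTop]
    intro η hη
    set δ : ℝ := min (1/8) (η/8) with hδdef
    set B : ℝ := max 100 (24/η) with hBdef
    have hδ0 : 0 < δ := lt_min (by norm_num) (by positivity)
    have hδ8 : δ ≤ 1/8 := min_le_left _ _
    have hδη : δ ≤ η/8 := min_le_right _ _
    have hB8 : (8:ℝ) ≤ B := le_trans (by norm_num) (le_max_left _ _)
    have hB0 : (0:ℝ) < B := by linarith
    have hB24 : 24/η ≤ B := le_max_right _ _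
    have h6B : 6/B ≤ η/4 := by
      rw [div_le_iff₀ hB0]
      have h24 : 24 ≤ η * B := by
        have := mul_le_mul_of_nonneg_left hB24 hη.le
        have he : η * (24/η) = 24 := by field_simp
        linarith [he ▸ this]
      nlinarith
    obtain ⟨M, hM⟩ := hev δ B hδ0 hδ8 hB8
    refine ⟨M, fun n hn => ?_⟩
    have hk := pg_key a hpos hsum δ B hδ0 hδ8 hB8 M
      (fun m hm => (hM m hm).1) (fun m hm => (hM m hm).2.1) (fun m hm => (hM m hm).2.2)
      (N + n) (by omega)
    rw [Real.dist_eq, sub_zero, htail N n]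
    calc |(∑' k, 1 / (a ((N + n) + k) : ℝ))⁻¹ + 1 - (a (N + n) : ℝ)| ≤ 3*δ + 6/B := hk
      _ ≤ 3*(η/8) + η/4 := by linarith
      _ < η := by linarith
end

section
/- Let r > 0 with pseudo-greedy expansion (a_n), remainder sequence x_n = r − ∑_{k<n} 1/a_k, and gap sequence ε_n = x_n^{−1} + 1 − a_n. Then a_{n+1} = a_n²/(1 − ε_n) − a_n + (1 − ε_{n+1}) for all n. -/
open Filter Finset

theorem pseudo_greedy_recurrence
    (r : ℝ) (hr : 0 < r) (a : ℕ → ℤ) (x ε : ℕ → ℝ)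
    (hx : ∀ n, x n = r - ∑ k ∈ Finset.range n, 1 / (a k : ℝ))
    (ha : ∀ n, a n = round ((x n)⁻¹ + 1))
    (hε : ∀ n, ε n = (x n)⁻¹ + 1 - (a n : ℝ)) :
    ∀ n, (a (n + 1) : ℝ) = (a n : ℝ) ^ 2 / (1 - ε n) - (a n : ℝ) + (1 - ε (n + 1)) := by
  have hεb : ∀ n, |ε n| ≤ 1 / 2 := by
    intro n
    rw [hε n, ha n]
    exact abs_sub_round _
  have step : ∀ n, x n ≠ 0 → 1 ≤ a n →
      x (n + 1) ≠ 0 ∧ (x (n + 1))⁻¹ = (a n : ℝ) ^ 2 / (1 - ε n) - (a n : ℝ) ∧ 1 ≤ a (n + 1) := by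
    intro n hn han
    have hεu : ε n ≤ 1 / 2 := (abs_le.1 (hεb n)).2
    have hεl : -(1 / 2) ≤ ε n := (abs_le.1 (hεb n)).1
    have h1ε : (0 : ℝ) < 1 - ε n := by linarith
    have hanR : (1 : ℝ) ≤ (a n : ℝ) := by exact_mod_cast han
    have haneR : (a n : ℝ) ≠ 0 := by linarith
    have htx : (x n)⁻¹ = (a n : ℝ) - 1 + ε n := by have := hε n; linarith
    have hux : x n * ((a n : ℝ) - 1 + ε n) = 1 := by
      rw [← htx]; exact mul_inv_cancel₀ hn
    have hxsucc : x (n + 1) = x n - 1 / (a n : ℝ) := by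
      rw [hx (n + 1), hx n, Finset.sum_range_succ]; ring
    have hkey : x (n + 1) * ((a n : ℝ) * ((a n : ℝ) - 1 + ε n)) = 1 - ε n := by
      rw [hxsucc]
      field_simp
      linear_combination (a n : ℝ) * hux
    have hvne : x (n + 1) ≠ 0 := by
      intro h0
      rw [h0, zero_mul] at hkey
      linarith
    have hinv : (x (n + 1))⁻¹ = (a n : ℝ) * ((a n : ℝ) - 1 + ε n) / (1 - ε n) := by
      rw [eq_div_iff (by linarith : (1 : ℝ) - ε n ≠ 0), ← hkey]
      field_simp
    have hform : (x (n + 1))⁻¹ = (a n : ℝ) ^ 2 / (1 - ε n) - (a n : ℝ) := by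
      rw [hinv]
      field_simp
      ring
    refine ⟨hvne, hform, ?_⟩
    have hbound : -(1 / 3 : ℝ) ≤ (x (n + 1))⁻¹ := by
      rw [hinv, le_div_iff₀ h1ε]
      nlinarith [mul_nonneg (by linarith : (0:ℝ) ≤ (a n : ℝ) - 1) (by linarith : (0:ℝ) ≤ (a n : ℝ) + ε n)]
    have hεu' : ε (n + 1) ≤ 1 / 2 := (abs_le.1 (hεb (n + 1))).2
    have : (0 : ℝ) < (a (n + 1) : ℝ) := by
      have := hε (n + 1)
      linarith
    have h0 : (0 : ℤ) < a (n + 1) := by exact_mod_cast this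
    omega
  have inv : ∀ n, x n ≠ 0 ∧ 1 ≤ a n := by
    intro n
    induction n with
    | zero =>
      have hx0 : x 0 = r := by simp [hx 0]
      refine ⟨by rw [hx0]; exact hr.ne', ?_⟩
      rw [ha 0, round_eq, Int.le_floor]
      have : (0 : ℝ) < (x 0)⁻¹ := by rw [hx0]; positivity
      push_cast
      linarith
    | succ n ih =>
      obtain ⟨h1, h2, h3⟩ := step n ih.1 ih.2
      exact ⟨h1, h3⟩
  intro n
  obtain ⟨hn, han⟩ := inv n
  obtain ⟨-, hform, -⟩ := step n hn han
  have := hε (n + 1)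
  linarith
end

section
/- Let r > 0 and (ε_n) be the gap sequence of its pseudo-greedy expansion. If ε_n = 0 for some n, then ε_{n+1} = 0. -/
open Filter Finset

theorem gap_zero_propagates
    (r : ℝ) (hr : 0 < r) (a : ℕ → ℤ) (x ε : ℕ → ℝ)
    (hx : ∀ n, x n = r - ∑ k ∈ Finset.range n, 1 / (a k : ℝ))
    (ha : ∀ n, a n = round ((x n)⁻¹ + 1))
    (hε : ∀ n, ε n = (x n)⁻¹ + 1 - (a n : ℝ))
    (n : ℕ) (hzero : ε n = 0) :
    ε (n + 1) = 0 := by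
  have hxn1 : x (n+1) = x n - 1/(a n : ℝ) := by
    rw [hx, hx, Finset.sum_range_succ]; ring
  have hinv : (x n)⁻¹ = (a n : ℝ) - 1 := by
    have := hε n; rw [hzero] at this; linarith
  obtain ⟨m, hm⟩ : ∃ m : ℤ, (x (n+1))⁻¹ = (m : ℝ) := by
    by_cases h0 : x n = 0
    · refine ⟨-1, ?_⟩
      have h1 : (a n : ℝ) = 1 := by rw [h0] at hinv; simp at hinv; linarith
      rw [hxn1, h0, h1]; norm_num
    · have hne : (a n : ℝ) - 1 ≠ 0 := by rw [← hinv]; exact inv_ne_zero h0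
      have hxeq : x n = ((a n : ℝ) - 1)⁻¹ := by rw [← hinv, inv_inv]
      by_cases ha0 : (a n : ℝ) = 0
      · refine ⟨-1, ?_⟩
        rw [hxn1, hxeq, ha0]; norm_num
      · refine ⟨a n * (a n - 1), ?_⟩
        rw [hxn1, hxeq]
        push_cast
        have key : ((a n:ℝ)-1)⁻¹ - 1/(a n:ℝ) = ((a n:ℝ)*((a n:ℝ)-1))⁻¹ := by
          field_simp
          ring
        rw [key, inv_inv]
  rw [hε, ha, hm]
  rw [show ((m:ℝ)+1) = ((m+1 : ℤ):ℝ) by push_cast; ring, round_intCast]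
  push_cast; ring
end

section
/- For any positive integer m, the pseudo-greedy expansion of 1/m is given by a_n = s_n(m), where s_1(m) = m + 1 and s_{n+1}(m) = s_n(m)² − s_n(m) + 1; moreover the remainder sequence satisfies x_n = 1/(s_n(m) − 1) and the gap sequence is identically zero. -/
open Filter Finset

theorem pseudo_greedy_of_unit_fraction
    (m : ℕ) (hm : 0 < m)
    (s : ℕ → ℕ) (hs0 : s 0 = m + 1) (hsrec : ∀ n, s (n + 1) = (s n) ^ 2 - s n + 1)
    (a : ℕ → ℤ) (x ε : ℕ → ℝ)
    (hx : ∀ n, x n = 1 / (m : ℝ) - ∑ k ∈ Finset.range n, 1 / (a k : ℝ))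
    (ha : ∀ n, a n = round ((x n)⁻¹ + 1))
    (hε : ∀ n, ε n = (x n)⁻¹ + 1 - (a n : ℝ)) :
    (∀ n, a n = (s n : ℤ)) ∧ (∀ n, x n = 1 / ((s n : ℝ) - 1)) ∧ (∀ n, ε n = 0) := by
  have hs2 : ∀ n, 2 ≤ s n := by
    intro n
    induction n with
    | zero => omega
    | succ k ih =>
      have h := hsrec k
      have hsq : s k ^ 2 = s k * s k := sq (s k)
      nlinarith [Nat.sub_add_cancel (show s k ≤ s k ^ 2 by nlinarith)]
  have key : ∀ n, x n = 1 / ((s n : ℝ) - 1) := by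
    intro n
    induction n with
    | zero =>
      rw [hx 0, hs0]
      simp
    | succ k ih =>
      have hk2 := hs2 k
      have hkR : (2 : ℝ) ≤ (s k : ℝ) := by exact_mod_cast hk2
      have hak : a k = (s k : ℤ) := by
        rw [ha k, ih]
        rw [one_div, inv_inv]
        have : (s k : ℝ) - 1 + 1 = (s k : ℝ) := by ring
        rw [this]
        exact_mod_cast round_intCast (s k : ℤ)
      have hxk1 : x (k + 1) = x k - 1 / (a k : ℝ) := by
        rw [hx (k + 1), hx k, Finset.sum_range_succ]; ring
      rw [hxk1, ih, hak]
      have hcast : ((s (k + 1) : ℝ)) = (s k : ℝ) ^ 2 - (s k : ℝ) + 1 := by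
        rw [hsrec k]
        have hle : s k ≤ s k ^ 2 := by nlinarith
        push_cast [Nat.cast_sub hle]
        ring
      rw [hcast]
      push_cast
      have h1 : (s k : ℝ) - 1 ≠ 0 := by linarith
      have h2 : (s k : ℝ) ≠ 0 := by linarith
      rw [show (s k : ℝ) ^ 2 - (s k : ℝ) + 1 - 1 = (s k : ℝ) * ((s k : ℝ) - 1) by ring]
      field_simp
      ring
  have haS : ∀ n, a n = (s n : ℤ) := by
    intro n
    have hk2 := hs2 n
    have hkR : (2 : ℝ) ≤ (s n : ℝ) := by exact_mod_cast hk2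
    rw [ha n, key n, one_div, inv_inv]
    have : (s n : ℝ) - 1 + 1 = (s n : ℝ) := by ring
    rw [this]
    exact_mod_cast round_intCast (s n : ℤ)
  refine ⟨haS, key, fun n => ?_⟩
  have hk2 := hs2 n
  have hkR : (2 : ℝ) ≤ (s n : ℝ) := by exact_mod_cast hk2
  rw [hε n, key n, haS n, one_div, inv_inv]
  push_cast
  ring
end

section
/- Let r > 0 be rational with gap sequence (ε_n) of its pseudo-greedy expansion. If ε_n ≥ 0 for all sufficiently large n, then ε_n = 0 for all sufficiently large n. -/
open Filter Finset

private lemma round_gt (y : ℚ) : y - 1/2 < round y := by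
  rw [round_eq]
  have := Int.sub_one_lt_floor (y + 1/2)
  push_cast at this ⊢
  linarith

section helper

variable (X : ℕ → ℚ) (a : ℕ → ℤ)

private lemma lt_a (ha : ∀ n, a n = round ((X n)⁻¹ + 1)) (n : ℕ) (hx : 0 < X n) :
    (X n)⁻¹ + 1/2 < (a n : ℚ) := by
  have := round_gt ((X n)⁻¹ + 1)
  rw [← ha n] at this
  linarith

private lemma aux_pos (hrec : ∀ n, X (n+1) = X n - 1/(a n))
    (ha : ∀ n, a n = round ((X n)⁻¹ + 1)) (h0 : 0 < X 0) : ∀ n, 0 < X n := by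
  intro n
  induction n with
  | zero => exact h0
  | succ n ih =>
    have ht : 0 < (X n)⁻¹ := inv_pos.mpr ih
    have hla : (X n)⁻¹ < (a n : ℚ) := by have := lt_a X a ha n ih; linarith
    have hapos : (0:ℚ) < (a n : ℚ) := lt_trans ht hla
    have h1 : ((a n : ℚ))⁻¹ < (X n)⁻¹⁻¹ := inv_strictAnti₀ ht hla
    rw [inv_inv] at h1
    rw [hrec n, one_div]
    linarith

private lemma persist (hrec : ∀ n, X (n+1) = X n - 1/(a n))
    (ha : ∀ n, a n = round ((X n)⁻¹ + 1)) (n : ℕ) (hx : 0 < X n)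
    (hE : (X n)⁻¹ + 1 - (a n : ℚ) = 0) : (X (n+1))⁻¹ + 1 - (a (n+1) : ℚ) = 0 := by
  set t : ℚ := (X n)⁻¹ with htdef
  have ht : 0 < t := inv_pos.mpr hx
  have haq : (a n : ℚ) = t + 1 := by linarith
  have ht1 : t + 1 ≠ 0 := by positivity
  have htne : t ≠ 0 := ne_of_gt ht
  have hXn : X n = t⁻¹ := by rw [htdef, inv_inv]
  have hX1 : X (n+1) = (t * (t + 1))⁻¹ := by
    rw [hrec n, haq, hXn]
    field_simp
    ring
  -- t is an integer
  obtain ⟨m, hm⟩ : ∃ m : ℤ, (m : ℚ) = t := ⟨a n - 1, by push_cast; linarith⟩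
  have hinv : (X (n+1))⁻¹ = ((m * m + m : ℤ) : ℚ) := by
    rw [hX1, inv_inv]; push_cast; rw [hm]; ring
  have ha1 : a (n+1) = m * m + m + 1 := by
    rw [ha (n+1), hinv]
    have : ((m * m + m : ℤ) : ℚ) + 1 = ((m * m + m + 1 : ℤ) : ℚ) := by push_cast; ring
    rw [this, round_intCast]
  rw [hinv, ha1]
  push_cast
  ring

private lemma descent (hrec : ∀ n, X (n+1) = X n - 1/(a n))
    (ha : ∀ n, a n = round ((X n)⁻¹ + 1)) (n : ℕ) (hx : 0 < X n)
    (c m : ℤ) (hc : 0 < c) (hm : (c : ℚ) * (X n)⁻¹ = m)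
    (hEpos : 0 < (X n)⁻¹ + 1 - (a n : ℚ)) :
    ∃ c' : ℤ, 0 < c' ∧ c' < c ∧ ∃ m' : ℤ, (c' : ℚ) * (X (n+1))⁻¹ = m' := by
  set t : ℚ := (X n)⁻¹ with htdef
  have ht : 0 < t := inv_pos.mpr hx
  have hla : t + 1/2 < (a n : ℚ) := lt_a X a ha n hx
  have hapos : (0:ℚ) < (a n : ℚ) := by linarith
  have haZ : 0 < a n := by exact_mod_cast hapos
  have hane : (a n : ℚ) ≠ 0 := ne_of_gt hapos
  have htne : t ≠ 0 := ne_of_gt ht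
  have hXn : X n = t⁻¹ := by rw [htdef, inv_inv]
  set E : ℚ := t + 1 - (a n : ℚ) with hEdef
  have hEhalf : E < 1/2 := by
    have := round_gt (t + 1)
    rw [← ha n] at this
    simp only [hEdef]
    linarith
  refine ⟨c - (m + c - c * a n), ?_, ?_, a n * m, ?_⟩
  · -- 0 < c'
    have h1 : ((m + c - c * a n : ℤ) : ℚ) = c * E := by push_cast [hEdef]; rw [← hm]; ring
    have h2 : ((m + c - c * a n : ℤ) : ℚ) < (c : ℚ) * (1/2) := by
      rw [h1]
      exact mul_lt_mul_of_pos_left hEhalf (by exact_mod_cast hc)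
    have h3 : (2 : ℚ) * ((m + c - c * a n : ℤ) : ℚ) < (c : ℚ) := by linarith
    have h4 : 2 * (m + c - c * a n) < c := by exact_mod_cast h3
    omega
  · -- c' < c
    have h1 : ((m + c - c * a n : ℤ) : ℚ) = c * E := by push_cast [hEdef]; rw [← hm]; ring
    have h2 : (0:ℚ) < ((m + c - c * a n : ℤ) : ℚ) := by
      rw [h1]; exact mul_pos (by exact_mod_cast hc) hEpos
    have h3 : 0 < m + c - c * a n := by exact_mod_cast h2
    omega
  · -- integrality
    have hc' : ((c - (m + c - c * a n) : ℤ) : ℚ) = (c : ℚ) * ((a n : ℚ) - t) := by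
      push_cast
      rw [← hm]
      ring
    have hamt : (a n : ℚ) - t ≠ 0 := by intro h; linarith [hla]
    have hX1 : X (n+1) = ((a n : ℚ) - t) / (t * (a n : ℚ)) := by
      rw [hrec n, hXn]
      field_simp
    rw [hX1, hc', inv_div]
    push_cast
    rw [← hm]
    field_simp

private lemma hit_zero (hrec : ∀ n, X (n+1) = X n - 1/(a n))
    (ha : ∀ n, a n = round ((X n)⁻¹ + 1)) (h0 : 0 < X 0)
    (N : ℕ) (hnn : ∀ n ≥ N, 0 ≤ (X n)⁻¹ + 1 - (a n : ℚ)) :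
    ∀ c : ℕ, ∀ n ≥ N, 0 < c → (∃ m : ℤ, (c : ℚ) * (X n)⁻¹ = m) →
      ∃ k ≥ N, (X k)⁻¹ + 1 - (a k : ℚ) = 0 := by
  intro c
  induction c using Nat.strong_induction_on with
  | _ c ih =>
    intro n hn hcpos ⟨m, hm⟩
    by_cases hE : (X n)⁻¹ + 1 - (a n : ℚ) = 0
    · exact ⟨n, hn, hE⟩
    · have hEpos : 0 < (X n)⁻¹ + 1 - (a n : ℚ) := lt_of_le_of_ne (hnn n hn) (Ne.symm hE)
      have hx : 0 < X n := aux_pos X a hrec ha h0 n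
      obtain ⟨c', hc'0, hc'lt, m', hm'⟩ :=
        descent X a hrec ha n hx (c : ℤ) m (by exact_mod_cast hcpos) hm hEpos
      have h1 : c'.toNat < c := by omega
      have h2 : 0 < c'.toNat := by omega
      have h3 : ((c'.toNat : ℤ) : ℚ) = (c' : ℚ) := by
        congr 1; omega
      refine ih c'.toNat h1 (n+1) (le_trans hn (Nat.le_succ n)) h2 ⟨m', ?_⟩
      rw [show ((c'.toNat : ℕ) : ℚ) = ((c'.toNat : ℤ) : ℚ) by push_cast; ring, h3, hm']

end helper

theorem gap_eventually_zero_of_eventually_nonneg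
    (r : ℚ) (hr : 0 < r) (a : ℕ → ℤ) (x ε : ℕ → ℝ)
    (hx : ∀ n, x n = (r : ℝ) - ∑ k ∈ Finset.range n, 1 / (a k : ℝ))
    (ha : ∀ n, a n = round ((x n)⁻¹ + 1))
    (hε : ∀ n, ε n = (x n)⁻¹ + 1 - (a n : ℝ))
    (hnonneg : ∃ N, ∀ n ≥ N, 0 ≤ ε n) :
    ∃ N, ∀ n ≥ N, ε n = 0 := by
  set X : ℕ → ℚ := fun n => r - ∑ k ∈ Finset.range n, 1 / (a k : ℚ) with hXdef
  have hxX : ∀ n, x n = ((X n : ℚ) : ℝ) := by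
    intro n
    rw [hx n, hXdef]
    push_cast
    ring
  have hrec : ∀ n, X (n+1) = X n - 1/(a n) := by
    intro n
    simp only [hXdef, Finset.sum_range_succ]
    ring
  have hinv : ∀ n, (x n)⁻¹ = (((X n)⁻¹ : ℚ) : ℝ) := by
    intro n; rw [hxX n, Rat.cast_inv]
  have haQ : ∀ n, a n = round ((X n)⁻¹ + 1) := by
    intro n
    rw [ha n, hinv n]
    rw [show ((((X n)⁻¹ : ℚ)) : ℝ) + 1 = ((((X n)⁻¹ + 1 : ℚ)) : ℝ) by push_cast; ring]
    rw [Rat.round_cast]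
  have hεQ : ∀ n, ε n = (((X n)⁻¹ + 1 - (a n : ℚ) : ℚ) : ℝ) := by
    intro n
    rw [hε n, hinv n]
    push_cast
    ring
  have h0 : 0 < X 0 := by
    simp [hXdef, hr]
  obtain ⟨N, hN⟩ := hnonneg
  have hnn : ∀ n ≥ N, 0 ≤ (X n)⁻¹ + 1 - (a n : ℚ) := by
    intro n hn
    have := hN n hn
    rw [hεQ n] at this
    exact_mod_cast this
  -- initial integrality certificate: c = (X N).num
  have hXN : 0 < X N := aux_pos X a hrec haQ h0 N
  have hnum : 0 < (X N).num := Rat.num_pos.mpr hXN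
  have hint : ((X N).num : ℚ) * (X N)⁻¹ = ((X N).den : ℤ) := by
    have hne : X N ≠ 0 := ne_of_gt hXN
    have hden : ((X N).den : ℚ) ≠ 0 := by
      exact_mod_cast (X N).den_nz
    have h1 : ((X N).num : ℚ) = X N * ((X N).den : ℚ) :=
      (div_eq_iff hden).mp (Rat.num_div_den (X N))
    rw [h1, mul_comm (X N), mul_assoc, mul_inv_cancel₀ hne]
    push_cast
    ring
  obtain ⟨k, hk, hEk⟩ := hit_zero X a hrec haQ h0 N hnn (X N).num.toNat N le_rfl
    (by omega) ⟨((X N).den : ℤ), by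
      have htn : (((X N).num.toNat : ℤ) : ℚ) = ((X N).num : ℚ) := by
        rw [Int.toNat_of_nonneg (le_of_lt hnum)]
      rw [show (((X N).num.toNat : ℕ) : ℚ) = (((X N).num.toNat : ℤ) : ℚ) by push_cast; ring,
        htn, hint]⟩
  refine ⟨k, ?_⟩
  have hall : ∀ n ≥ k, (X n)⁻¹ + 1 - (a n : ℚ) = 0 := by
    intro n hn
    induction n, hn using Nat.le_induction with
    | base => exact hEk
    | succ n hn ih => exact persist X a hrec haQ n (aux_pos X a hrec haQ h0 n) ih
  intro n hn
  rw [hεQ n, hall n hn]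
  exact Rat.cast_zero
end
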